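/- arXiv:2202.03362 — 4 statements merged into one kernel-verified Lean document; each statement's English description precedes it below -/
import Mathlib

section
/- There exists an absolute constant L > 0 such that for all ω = (α⁺, α⁻, γ₁, δ) ∈ Ω̂, all ω̃ = (α̃⁺, α̃⁻, γ̃₁, δ̃) ∈ Ω̂, and all z ∈ ℂ: |E_ω(z) − E_{ω̃}(z)| ≤ e^{|γ₁||z| + 5δ|z|²} (e^{|γ₁ − γ̃₁||z| + (|δ − δ̃|/2)|z|²} − 1) + |z| (∑_{i=1}^∞ [|α_i⁺ − α̃_i⁺|³ + |α_i⁻ − α̃_i⁻|³])^{1/3} e^{|γ̃₁||z| + (δ̃/2)|z|² + L(|z|(δ^{1/2} + δ̃^{1/2}) + 1)³}. -/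
open Filter Topology Finset

/-- The parameter space Ω̂ of quadruples (α⁺, α⁻, γ₁, δ). -/
structure OmegaHat where
  aP : ℕ → ℝ
  aM : ℕ → ℝ
  g1 : ℝ
  del : ℝ
  aP_nonneg : ∀ i, 0 ≤ aP i
  aM_nonneg : ∀ i, 0 ≤ aM i
  aP_antitone : Antitone aP
  aM_antitone : Antitone aM
  del_nonneg : 0 ≤ del
  summable_aP_sq : Summable fun i => aP i ^ 2
  summable_aM_sq : Summable fun i => aM i ^ 2
  sum_sq_le : (∑' i, aP i ^ 2) + (∑' i, aM i ^ 2) ≤ del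

/-- γ₂ = δ − ∑ (α_i⁺)² − ∑ (α_i⁻)². -/
noncomputable def gamma2 (ω : OmegaHat) : ℝ :=
  ω.del - (∑' i, ω.aP i ^ 2) - (∑' i, ω.aM i ^ 2)

/-- The Laguerre–Pólya function E_ω. -/
noncomputable def Eomega (ω : OmegaHat) (z : ℂ) : ℂ :=
  Complex.exp (-(ω.g1 : ℂ) * z - (gamma2 ω : ℂ) / 2 * z ^ 2) *
    (∏' i, (Complex.exp (z * (ω.aP i : ℂ)) * (1 - z * (ω.aP i : ℂ)))) *
    (∏' i, (Complex.exp (-(z * (ω.aM i : ℂ))) * (1 + z * (ω.aM i : ℂ))))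

-- ### Auxiliary material ###

noncomputable def Complex.abs : AbsoluteValue ℂ ℝ where
  toFun z := ‖z‖
  map_mul' := norm_mul
  nonneg' := norm_nonneg
  eq_zero' _ := norm_eq_zero
  add_le' := norm_add_le

lemma Complex.abs_apply (z : ℂ) : Complex.abs z = ‖z‖ := rfl
lemma Complex.norm_eq_abs (z : ℂ) : ‖z‖ = Complex.abs z := rfl
@[simp] lemma Complex.abs_exp (z : ℂ) : Complex.abs (Complex.exp z) = Real.exp z.re :=
  Complex.norm_exp z
lemma Complex.sq_abs (z : ℂ) : Complex.abs z ^ 2 = Complex.normSq z := Complex.sq_norm z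
lemma Complex.re_le_abs (z : ℂ) : z.re ≤ Complex.abs z := Complex.re_le_norm z
@[simp] lemma Complex.abs_natCast (n : ℕ) : Complex.abs n = n := Complex.norm_natCast n
@[simp] lemma Complex.abs_ofReal (r : ℝ) : Complex.abs r = |r| := by
  rw [Complex.abs_apply, Complex.norm_real, Real.norm_eq_abs]
@[simp] lemma Complex.abs_two : Complex.abs 2 = 2 := by
  rw [Complex.abs_apply]; simp
lemma Complex.continuous_abs : Continuous Complex.abs := continuous_norm

noncomputable def gg (w : ℂ) : ℂ := Complex.exp w * (1 - w)
noncomputable def ff (w : ℂ) : ℂ := Complex.exp (w + w^2/2) * (1 - w)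

lemma abs_gg_le (w : ℂ) : Complex.abs (gg w) ≤ Real.exp (Complex.abs w ^ 2 / 2) := by
  set x := w.re; set y := w.im
  have hsq : Complex.abs (gg w) ^ 2 ≤ Real.exp (Complex.abs w ^ 2 / 2) ^ 2 := by
    rw [gg, map_mul, mul_pow, Complex.abs_exp, ← Real.exp_nat_mul, Complex.sq_abs,
      Complex.normSq_apply, ← Real.exp_nat_mul, Complex.sq_abs, Complex.normSq_apply]
    have h1 : (1 - w).re = 1 - x := by simp [Complex.sub_re]; rfl
    have h2 : (1 - w).im = -y := by simp [Complex.sub_im]; rfl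
    rw [h1, h2]
    have key : (1 - x) * (1 - x) + -y * -y ≤ Real.exp (x * x + y * y - 2 * x) := by
      nlinarith [Real.add_one_le_exp (x * x + y * y - 2 * x)]
    calc Real.exp ((2:ℕ) * x) * ((1-x)*(1-x) + -y*-y)
        ≤ Real.exp ((2:ℕ) * x) * Real.exp (x*x + y*y - 2*x) :=
          mul_le_mul_of_nonneg_left key (Real.exp_nonneg _)
      _ = Real.exp ((2:ℕ) * ((x*x + y*y)/2)) := by rw [← Real.exp_add]; ring_nf
  have := abs_le_abs (a := Complex.abs (gg w)) (b := Real.exp (Complex.abs w ^2/2))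
  nlinarith [Complex.abs.nonneg (gg w), Real.exp_pos (Complex.abs w ^ 2 / 2)]

lemma ff_eq (w : ℂ) : ff w = Complex.exp (w^2/2) * gg w := by
  rw [ff, gg, ← mul_assoc, ← Complex.exp_add]; ring_nf

lemma abs_ff_le (w : ℂ) : Complex.abs (ff w) ≤ Real.exp (Complex.abs w ^ 2) := by
  rw [ff_eq, map_mul]
  have h1 : Complex.abs (Complex.exp (w^2/2)) ≤ Real.exp (Complex.abs w ^2 / 2) := by
    rw [Complex.abs_exp]
    apply Real.exp_le_exp.2
    calc (w^2/2).re ≤ Complex.abs (w^2/2) := Complex.re_le_abs _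
      _ = Complex.abs w ^ 2 / 2 := by rw [map_div₀, map_pow]; simp
  calc Complex.abs (Complex.exp (w^2/2)) * Complex.abs (gg w)
      ≤ Real.exp (Complex.abs w ^2/2) * Real.exp (Complex.abs w ^2/2) :=
        mul_le_mul h1 (abs_gg_le w) (Complex.abs.nonneg _) (Real.exp_nonneg _)
    _ = Real.exp (Complex.abs w ^ 2) := by rw [← Real.exp_add]; ring_nf

lemma hasDerivAt_ff (w : ℂ) :
    HasDerivAt ff (-(w^2) * Complex.exp (w + w^2/2)) w := by
  have h1 : HasDerivAt (fun w : ℂ => w + w^2/2) (1 + w) w := by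
    have := (hasDerivAt_id w).add ((hasDerivAt_pow 2 w).div_const 2)
    exact this.congr_deriv (by norm_num)
  have h2 := h1.cexp
  have h3 : HasDerivAt (fun w : ℂ => 1 - w) (-1) w := (hasDerivAt_id w).const_sub 1
  have h4 := h2.mul h3
  exact h4.congr_deriv (by ring)

lemma hasDerivAt_gg (w : ℂ) : HasDerivAt gg (-w * Complex.exp w) w := by
  have h2 := Complex.hasDerivAt_exp w
  have h3 : HasDerivAt (fun w : ℂ => 1 - w) (-1) w := (hasDerivAt_id w).const_sub 1
  have h4 := h2.mul h3
  exact h4.congr_deriv (by ring)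

lemma ff_diff_le {M : ℝ} (hM : 0 ≤ M) {a b : ℂ} (ha : Complex.abs a ≤ M)
    (hb : Complex.abs b ≤ M) :
    Complex.abs (ff a - ff b) ≤ M^2 * Real.exp (M + M^2/2) * Complex.abs (a - b) := by
  have hconv : Convex ℝ (Metric.closedBall (0:ℂ) M) := convex_closedBall _ _
  have hder : ∀ x ∈ Metric.closedBall (0:ℂ) M,
      HasDerivWithinAt ff (-(x^2) * Complex.exp (x + x^2/2)) (Metric.closedBall (0:ℂ) M) x :=
    fun x _ => (hasDerivAt_ff x).hasDerivWithinAt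
  have hbound : ∀ x ∈ Metric.closedBall (0:ℂ) M,
      ‖-(x^2) * Complex.exp (x + x^2/2)‖ ≤ M^2 * Real.exp (M + M^2/2) := by
    intro x hx
    rw [Metric.mem_closedBall, dist_zero_right, Complex.norm_eq_abs] at hx
    rw [norm_mul, norm_neg, norm_pow, Complex.norm_eq_abs, Complex.norm_eq_abs,
      Complex.abs_exp]
    have hre : (x + x^2/2).re ≤ M + M^2/2 := by
      calc (x + x^2/2).re ≤ Complex.abs (x + x^2/2) := Complex.re_le_abs _
        _ ≤ Complex.abs x + Complex.abs (x^2/2) := Complex.abs.add_le _ _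
        _ = Complex.abs x + Complex.abs x ^2/2 := by rw [map_div₀, map_pow]; simp
        _ ≤ M + M^2/2 := by nlinarith [Complex.abs.nonneg x]
    exact mul_le_mul (by nlinarith [Complex.abs.nonneg x]) (Real.exp_le_exp.2 hre)
      (Real.exp_nonneg _) (by positivity)
  have := hconv.norm_image_sub_le_of_norm_hasDerivWithin_le hder hbound
    (y := a) (x := b) (by simpa [Metric.mem_closedBall, dist_zero_right, Complex.norm_eq_abs] using hb)
    (by simpa [Metric.mem_closedBall, dist_zero_right, Complex.norm_eq_abs] using ha)
  simpa [Complex.norm_eq_abs, Complex.dist_eq] using this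

lemma gg_sub_one_le (w : ℂ) :
    Complex.abs (gg w - 1) ≤ Complex.abs w ^ 2 * Real.exp (Complex.abs w) := by
  set M := Complex.abs w with hMdef
  have hM : 0 ≤ M := Complex.abs.nonneg w
  have hconv : Convex ℝ (Metric.closedBall (0:ℂ) M) := convex_closedBall _ _
  have hder : ∀ x ∈ Metric.closedBall (0:ℂ) M,
      HasDerivWithinAt gg (-x * Complex.exp x) (Metric.closedBall (0:ℂ) M) x :=
    fun x _ => (hasDerivAt_gg x).hasDerivWithinAt
  have hbound : ∀ x ∈ Metric.closedBall (0:ℂ) M,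
      ‖-x * Complex.exp x‖ ≤ M * Real.exp M := by
    intro x hx
    rw [Metric.mem_closedBall, dist_zero_right, Complex.norm_eq_abs] at hx
    rw [norm_mul, norm_neg, Complex.norm_eq_abs, Complex.norm_eq_abs, Complex.abs_exp]
    exact mul_le_mul hx (Real.exp_le_exp.2 ((Complex.re_le_abs x).trans hx))
      (Real.exp_nonneg _) hM
  have h0 : (0:ℂ) ∈ Metric.closedBall (0:ℂ) M := by
    simpa [Metric.mem_closedBall] using hM
  have hw : w ∈ Metric.closedBall (0:ℂ) M := by
    simp [Metric.mem_closedBall, dist_zero_right, Complex.norm_eq_abs]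
    exact hMdef.symm.le
  have := hconv.norm_image_sub_le_of_norm_hasDerivWithin_le hder hbound h0 hw
  have hgg0 : gg 0 = 1 := by simp [gg]
  rw [hgg0] at this
  calc Complex.abs (gg w - 1) ≤ M * Real.exp M * ‖w - 0‖ := this
    _ = Complex.abs w ^2 * Real.exp (Complex.abs w) := by
        rw [sub_zero, Complex.norm_eq_abs]; ring

lemma abs_exp_sub_one_le' (w : ℂ) :
    Complex.abs (Complex.exp w - 1) ≤ Real.exp (Complex.abs w) - 1 := by
  have hc : HasSum (fun n => w ^ n / (Nat.factorial n)) (Complex.exp w) := by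
    rw [Complex.exp_eq_exp_ℂ]
    exact NormedSpace.expSeries_div_hasSum_exp w
  have hr : HasSum (fun n => (Complex.abs w) ^ n / (Nat.factorial n)) (Real.exp (Complex.abs w)) := by
    rw [Real.exp_eq_exp_ℝ]
    exact NormedSpace.expSeries_div_hasSum_exp (Complex.abs w)
  have hc1 : HasSum (fun n => w ^ (n+1) / (Nat.factorial (n+1))) (Complex.exp w - 1) := by
    have := (hasSum_nat_add_iff' (f := fun n => w ^ n / (Nat.factorial n)) 1).2 hc
    simpa using this
  have hr1 : HasSum (fun n => (Complex.abs w) ^ (n+1) / (Nat.factorial (n+1))) (Real.exp (Complex.abs w) - 1) := by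
    have := (hasSum_nat_add_iff' (f := fun n => (Complex.abs w) ^ n / (Nat.factorial n)) 1).2 hr
    simpa using this
  have hnorm : ∀ n : ℕ, ‖w ^ (n+1) / ((Nat.factorial (n+1)) : ℂ)‖ = (Complex.abs w) ^ (n+1) / (Nat.factorial (n+1)) := by
    intro n
    rw [norm_div, norm_pow, Complex.norm_eq_abs, Complex.norm_eq_abs, Complex.abs_natCast]
  calc Complex.abs (Complex.exp w - 1) = ‖∑' n : ℕ, w ^ (n+1) / ((Nat.factorial (n+1)) : ℂ)‖ := by
        rw [hc1.tsum_eq, Complex.norm_eq_abs]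
    _ ≤ ∑' n : ℕ, ‖w ^ (n+1) / ((Nat.factorial (n+1)) : ℂ)‖ :=
        norm_tsum_le_tsum_norm (by
          apply Summable.congr hr1.summable
          intro n
          exact (hnorm n).symm)
    _ = Real.exp (Complex.abs w) - 1 := by
        rw [tsum_congr hnorm, hr1.tsum_eq]

lemma multipliable_of_summable_abs {c : ℕ → ℂ}
    (h : Summable fun i => Complex.abs (c i - 1)) : Multipliable c := by
  by_cases hz : ∀ i, c i ≠ 0
  · refine Complex.multipliable_of_summable_log ?_
    have h0 : Tendsto (fun i => Complex.abs (c i - 1)) atTop (𝓝 0) := h.tendsto_atTop_zero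
    have hev : ∀ᶠ i in atTop, ‖Complex.log (c i)‖ ≤ (3/2) * Complex.abs (c i - 1) := by
      filter_upwards [h0.eventually (eventually_le_nhds (by norm_num : (0:ℝ) < 1/2))] with i hi
      have : Complex.log (c i) = Complex.log (1 + (c i - 1)) := by ring_nf
      rw [this]
      exact Complex.norm_log_one_add_half_le_self (by simpa [Complex.norm_eq_abs] using hi)
    exact Summable.of_norm_bounded_eventually_nat (h.mul_left (3/2)) hev
  · push_neg at hz
    obtain ⟨i₀, hi₀⟩ := hz
    refine ⟨0, ?_⟩
    have hev : ∀ᶠ s : Finset ℕ in atTop, ∏ i ∈ s, c i = 0 := by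
      filter_upwards [eventually_ge_atTop {i₀}] with s hs
      exact Finset.prod_eq_zero (by simpa using hs) hi₀
    exact tendsto_const_nhds.congr' (hev.mono fun s h => h.symm)

lemma prod_diff_le (a b : ℕ → ℂ) (C : ℕ → ℝ) (hC : ∀ i, 1 ≤ C i)
    (ha : ∀ i, Complex.abs (a i) ≤ C i) (hb : ∀ i, Complex.abs (b i) ≤ C i) (n : ℕ) :
    Complex.abs (∏ i ∈ range n, a i - ∏ i ∈ range n, b i) ≤
      (∏ i ∈ range n, C i) * ∑ i ∈ range n, Complex.abs (a i - b i) := by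
  have hC0 : ∀ i, (0:ℝ) ≤ C i := fun i => le_trans zero_le_one (hC i)
  induction n with
  | zero => simp
  | succ n ih =>
    rw [prod_range_succ, prod_range_succ, prod_range_succ, sum_range_succ]
    have key : (∏ i ∈ range n, a i) * a n - (∏ i ∈ range n, b i) * b n =
        ((∏ i ∈ range n, a i) - (∏ i ∈ range n, b i)) * a n
          + (∏ i ∈ range n, b i) * (a n - b n) := by ring
    rw [key]
    have habs : Complex.abs (∏ i ∈ range n, b i) ≤ ∏ i ∈ range n, C i := by
      rw [map_prod]
      exact Finset.prod_le_prod (fun i _ => Complex.abs.nonneg _) (fun i _ => hb i)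
    have hprodC : (1:ℝ) ≤ ∏ i ∈ range n, C i := by
      have := Finset.prod_le_prod (s := range n) (f := fun _ => (1:ℝ)) (g := C)
        (fun i _ => zero_le_one) (fun i _ => hC i)
      simpa using this
    calc Complex.abs _ ≤ Complex.abs (((∏ i ∈ range n, a i) - ∏ i ∈ range n, b i) * a n)
          + Complex.abs ((∏ i ∈ range n, b i) * (a n - b n)) := Complex.abs.add_le _ _
      _ = Complex.abs ((∏ i ∈ range n, a i) - ∏ i ∈ range n, b i) * Complex.abs (a n)
          + Complex.abs (∏ i ∈ range n, b i) * Complex.abs (a n - b n) := by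
            rw [map_mul, map_mul]
      _ ≤ ((∏ i ∈ range n, C i) * ∑ i ∈ range n, Complex.abs (a i - b i)) * C n
          + (∏ i ∈ range n, C i) * Complex.abs (a n - b n) := by
            refine add_le_add (mul_le_mul ih (ha n) (Complex.abs.nonneg _) ?_)
              (mul_le_mul_of_nonneg_right habs (Complex.abs.nonneg _))
            have h1 : (0:ℝ) ≤ ∑ i ∈ range n, Complex.abs (a i - b i) :=
              Finset.sum_nonneg fun i _ => Complex.abs.nonneg _
            positivity
      _ ≤ (∏ i ∈ range n, C i) * C n *
            (∑ i ∈ range n, Complex.abs (a i - b i) + Complex.abs (a n - b n)) := by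
            have h1 : (0:ℝ) ≤ ∑ i ∈ range n, Complex.abs (a i - b i) :=
              Finset.sum_nonneg fun i _ => Complex.abs.nonneg _
            have h2 : (0:ℝ) ≤ Complex.abs (a n - b n) := Complex.abs.nonneg _
            nlinarith [mul_nonneg (mul_nonneg (le_trans zero_le_one hprodC) h2)
              (sub_nonneg.2 (hC n))]

lemma conj33 : Real.HolderConjugate 3 (3/2) := ⟨by norm_num, by norm_num, by norm_num⟩

lemma holder3 (s : Finset ℕ) (d m : ℕ → ℝ) (hd : ∀ i, 0 ≤ d i) (hm : ∀ i, 0 ≤ m i) :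
    ∑ i ∈ s, d i * m i ^ 2 ≤
      (∑ i ∈ s, d i ^ 3) ^ ((1:ℝ)/3) * (∑ i ∈ s, m i ^ 3) ^ ((2:ℝ)/3) := by
  have h := Real.inner_le_Lp_mul_Lq_of_nonneg s (f := d) (g := fun i => m i ^ 2) conj33
    (fun i _ => hd i) (fun i _ => sq_nonneg _)
  have e1 : ∀ i : ℕ, d i ^ (3:ℝ) = d i ^ 3 := fun i => by
    rw [← Real.rpow_natCast (d i) 3]; norm_num
  have e2 : ∀ i : ℕ, (m i ^ 2) ^ ((3:ℝ)/2) = m i ^ 3 := fun i => by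
    rw [← Real.rpow_natCast (m i) 2, ← Real.rpow_mul (hm i), ← Real.rpow_natCast (m i) 3]
    norm_num
  rw [Finset.sum_congr rfl (fun i _ => e1 i), Finset.sum_congr rfl (fun i _ => e2 i)] at h
  convert h using 2
  norm_num

lemma holder2 {a b c e : ℝ} (ha : 0 ≤ a) (hb : 0 ≤ b) (hc : 0 ≤ c) (he : 0 ≤ e) :
    a ^ ((1:ℝ)/3) * b ^ ((2:ℝ)/3) + c ^ ((1:ℝ)/3) * e ^ ((2:ℝ)/3) ≤
      (a + c) ^ ((1:ℝ)/3) * (b + e) ^ ((2:ℝ)/3) := by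
  have h := Real.inner_le_Lp_mul_Lq_of_nonneg (Finset.univ : Finset (Fin 2))
    (f := ![a ^ ((1:ℝ)/3), c ^ ((1:ℝ)/3)]) (g := ![b ^ ((2:ℝ)/3), e ^ ((2:ℝ)/3)]) conj33
    (fun i _ => by fin_cases i <;> simp <;> positivity)
    (fun i _ => by fin_cases i <;> simp <;> positivity)
  rw [Fin.sum_univ_two, Fin.sum_univ_two, Fin.sum_univ_two] at h
  simp only [Matrix.cons_val_zero, Matrix.cons_val_one, Matrix.head_cons] at h
  have e1 : (a ^ ((1:ℝ)/3)) ^ (3:ℝ) = a := by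
    rw [← Real.rpow_mul ha]; norm_num
  have e2 : (c ^ ((1:ℝ)/3)) ^ (3:ℝ) = c := by
    rw [← Real.rpow_mul hc]; norm_num
  have e3 : (b ^ ((2:ℝ)/3)) ^ ((3:ℝ)/2) = b := by
    rw [← Real.rpow_mul hb]; norm_num
  have e4 : (e ^ ((2:ℝ)/3)) ^ ((3:ℝ)/2) = e := by
    rw [← Real.rpow_mul he]; norm_num
  rw [e1, e2, e3, e4] at h
  convert h using 2
  norm_num

-- basic facts
lemma tsumP_nonneg (ω : OmegaHat) : 0 ≤ ∑' i, ω.aP i ^ 2 :=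
  tsum_nonneg fun i => sq_nonneg _
lemma tsumM_nonneg (ω : OmegaHat) : 0 ≤ ∑' i, ω.aM i ^ 2 :=
  tsum_nonneg fun i => sq_nonneg _

lemma tsumP_le (ω : OmegaHat) : ∑' i, ω.aP i ^ 2 ≤ ω.del := by
  have := ω.sum_sq_le; have := tsumM_nonneg ω; linarith
lemma tsumM_le (ω : OmegaHat) : ∑' i, ω.aM i ^ 2 ≤ ω.del := by
  have := ω.sum_sq_le; have := tsumP_nonneg ω; linarith

lemma aP_le_sqrt (ω : OmegaHat) (i : ℕ) : ω.aP i ≤ Real.sqrt ω.del := by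
  have h1 : ω.aP i ^ 2 ≤ ω.del :=
    le_trans (Summable.le_tsum ω.summable_aP_sq i fun j _ => sq_nonneg _) (tsumP_le ω)
  have := Real.sqrt_le_sqrt h1
  rwa [Real.sqrt_sq (ω.aP_nonneg i)] at this

lemma aM_le_sqrt (ω : OmegaHat) (i : ℕ) : ω.aM i ≤ Real.sqrt ω.del := by
  have h1 : ω.aM i ^ 2 ≤ ω.del :=
    le_trans (Summable.le_tsum ω.summable_aM_sq i fun j _ => sq_nonneg _) (tsumM_le ω)
  have := Real.sqrt_le_sqrt h1
  rwa [Real.sqrt_sq (ω.aM_nonneg i)] at this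

-- multipliability of the gg-products
lemma multipliable_ggP (ω : OmegaHat) (z : ℂ) :
    Multipliable fun i => gg (z * (ω.aP i : ℂ)) := by
  apply multipliable_of_summable_abs
  have hsum : Summable (fun i => (Complex.abs z ^ 2 * Real.exp (Complex.abs z * Real.sqrt ω.del)) * ω.aP i ^ 2) :=
    ω.summable_aP_sq.mul_left _
  refine Summable.of_nonneg_of_le (fun i => Complex.abs.nonneg _) ?_ hsum
  intro i
  have h1 := gg_sub_one_le (z * (ω.aP i : ℂ))
  have h2 : Complex.abs (z * (ω.aP i : ℂ)) = Complex.abs z * ω.aP i := by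
    rw [map_mul, Complex.abs_ofReal, abs_of_nonneg (ω.aP_nonneg i)]
  rw [h2] at h1
  refine le_trans h1 ?_
  have h3 : Complex.abs z * ω.aP i ≤ Complex.abs z * Real.sqrt ω.del :=
    mul_le_mul_of_nonneg_left (aP_le_sqrt ω i) (Complex.abs.nonneg z)
  have := Real.exp_le_exp.2 h3
  calc (Complex.abs z * ω.aP i) ^ 2 * Real.exp (Complex.abs z * ω.aP i)
      ≤ (Complex.abs z * ω.aP i) ^ 2 * Real.exp (Complex.abs z * Real.sqrt ω.del) := by
        exact mul_le_mul_of_nonneg_left this (sq_nonneg _)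
    _ = Complex.abs z ^ 2 * Real.exp (Complex.abs z * Real.sqrt ω.del) * ω.aP i ^ 2 := by
        ring

lemma multipliable_ggM (ω : OmegaHat) (z : ℂ) :
    Multipliable fun i => gg (-(z * (ω.aM i : ℂ))) := by
  apply multipliable_of_summable_abs
  have hsum : Summable (fun i => (Complex.abs z ^ 2 * Real.exp (Complex.abs z * Real.sqrt ω.del)) * ω.aM i ^ 2) :=
    ω.summable_aM_sq.mul_left _
  refine Summable.of_nonneg_of_le (fun i => Complex.abs.nonneg _) ?_ hsum
  intro i
  have h1 := gg_sub_one_le (-(z * (ω.aM i : ℂ)))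
  have h2 : Complex.abs (-(z * (ω.aM i : ℂ))) = Complex.abs z * ω.aM i := by
    rw [map_neg_eq_map, map_mul, Complex.abs_ofReal, abs_of_nonneg (ω.aM_nonneg i)]
  rw [h2] at h1
  refine le_trans h1 ?_
  have h3 : Complex.abs z * ω.aM i ≤ Complex.abs z * Real.sqrt ω.del :=
    mul_le_mul_of_nonneg_left (aM_le_sqrt ω i) (Complex.abs.nonneg z)
  have := Real.exp_le_exp.2 h3
  calc (Complex.abs z * ω.aM i) ^ 2 * Real.exp (Complex.abs z * ω.aM i)
      ≤ (Complex.abs z * ω.aM i) ^ 2 * Real.exp (Complex.abs z * Real.sqrt ω.del) := by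
        exact mul_le_mul_of_nonneg_left this (sq_nonneg _)
    _ = Complex.abs z ^ 2 * Real.exp (Complex.abs z * Real.sqrt ω.del) * ω.aM i ^ 2 := by
        ring

noncomputable def AA (ω : OmegaHat) (z : ℂ) : ℂ :=
  Complex.exp (-(ω.g1:ℂ)*z - (ω.del:ℂ)/2*z^2)

lemma hasProd_ffP (ω : OmegaHat) (z : ℂ) :
    HasProd (fun i => ff (z * (ω.aP i : ℂ)))
      (Complex.exp (z^2/2 * ((∑' i, ω.aP i ^ 2 : ℝ) : ℂ)) *
        ∏' i, gg (z * (ω.aP i : ℂ))) := by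
  have hs : HasSum (fun i => ((ω.aP i ^ 2 : ℝ) : ℂ)) ((∑' i, ω.aP i ^ 2 : ℝ) : ℂ) :=
    (Complex.ofRealCLM : ℝ →L[ℝ] ℂ).hasSum ω.summable_aP_sq.hasSum
  have hs3 : HasSum (fun i => (z * (ω.aP i : ℂ))^2/2) (z^2/2 * ((∑' i, ω.aP i ^ 2 : ℝ) : ℂ)) := by
    have heq : (fun i => (z * (ω.aP i : ℂ))^2/2) =
        fun i => (z^2/2) * ((ω.aP i ^ 2 : ℝ) : ℂ) := by
      funext i; push_cast; ring
    rw [heq]; exact hs.mul_left _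
  have hexp := hs3.cexp
  have hgg := (multipliable_ggP ω z).hasProd
  have heq2 : (fun i => ff (z * (ω.aP i : ℂ))) =
      fun i => Complex.exp ((z * (ω.aP i : ℂ))^2/2) * gg (z * (ω.aP i : ℂ)) :=
    funext fun i => ff_eq _
  rw [heq2]
  exact hexp.mul hgg

lemma hasProd_ffM (ω : OmegaHat) (z : ℂ) :
    HasProd (fun i => ff (-(z * (ω.aM i : ℂ))))
      (Complex.exp (z^2/2 * ((∑' i, ω.aM i ^ 2 : ℝ) : ℂ)) *
        ∏' i, gg (-(z * (ω.aM i : ℂ)))) := by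
  have hs : HasSum (fun i => ((ω.aM i ^ 2 : ℝ) : ℂ)) ((∑' i, ω.aM i ^ 2 : ℝ) : ℂ) :=
    (Complex.ofRealCLM : ℝ →L[ℝ] ℂ).hasSum ω.summable_aM_sq.hasSum
  have hs3 : HasSum (fun i => (-(z * (ω.aM i : ℂ)))^2/2) (z^2/2 * ((∑' i, ω.aM i ^ 2 : ℝ) : ℂ)) := by
    have heq : (fun i => (-(z * (ω.aM i : ℂ)))^2/2) =
        fun i => (z^2/2) * ((ω.aM i ^ 2 : ℝ) : ℂ) := by
      funext i; push_cast; ring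
    rw [heq]; exact hs.mul_left _
  have hexp := hs3.cexp
  have hgg := (multipliable_ggM ω z).hasProd
  have heq2 : (fun i => ff (-(z * (ω.aM i : ℂ)))) =
      fun i => Complex.exp ((-(z * (ω.aM i : ℂ)))^2/2) * gg (-(z * (ω.aM i : ℂ))) :=
    funext fun i => ff_eq _
  rw [heq2]
  exact hexp.mul hgg

lemma Eomega_eq (ω : OmegaHat) (z : ℂ) :
    Eomega ω z = AA ω z * (∏' i, ff (z * (ω.aP i : ℂ))) * (∏' i, ff (-(z * (ω.aM i : ℂ)))) := by
  rw [(hasProd_ffP ω z).tprod_eq, (hasProd_ffM ω z).tprod_eq, Eomega, AA]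
  simp only [gg, sub_neg_eq_add]
  have : -(ω.g1:ℂ)*z - ((gamma2 ω : ℝ):ℂ)/2*z^2 =
      -(ω.g1:ℂ)*z - (ω.del:ℂ)/2*z^2 + z^2/2 * ((∑' i, ω.aP i ^ 2 : ℝ) : ℂ)
        + z^2/2 * ((∑' i, ω.aM i ^ 2 : ℝ) : ℂ) := by
    rw [gamma2]; push_cast; ring
  rw [this, Complex.exp_add, Complex.exp_add]
  ring

lemma tendsto_finprod (ω : OmegaHat) (z : ℂ) :
    Tendsto (fun n => AA ω z * (∏ i ∈ range n, ff (z * (ω.aP i : ℂ)))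
      * (∏ i ∈ range n, ff (-(z * (ω.aM i : ℂ))))) atTop (𝓝 (Eomega ω z)) := by
  rw [Eomega_eq ω z]
  have hP := ((hasProd_ffP ω z).multipliable.hasProd).tendsto_prod_nat
  have hQ := ((hasProd_ffM ω z).multipliable.hasProd).tendsto_prod_nat
  exact (tendsto_const_nhds.mul hP).mul hQ

-- now the new material
lemma abs_zr {z : ℂ} {a : ℝ} (ha : 0 ≤ a) :
    Complex.abs (z * (a:ℂ)) = Complex.abs z * a := by
  rw [map_mul, Complex.abs_ofReal, abs_of_nonneg ha]

lemma abs_ff_zP_le (ω : OmegaHat) (z : ℂ) (i : ℕ) :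
    Complex.abs (ff (z * (ω.aP i : ℂ))) ≤ Real.exp (Complex.abs z ^2 * ω.aP i ^2) := by
  have := abs_ff_le (z * (ω.aP i : ℂ))
  rwa [abs_zr (ω.aP_nonneg i), mul_pow] at this

lemma abs_ff_zM_le (ω : OmegaHat) (z : ℂ) (i : ℕ) :
    Complex.abs (ff (-(z * (ω.aM i : ℂ)))) ≤ Real.exp (Complex.abs z ^2 * ω.aM i ^2) := by
  have := abs_ff_le (-(z * (ω.aM i : ℂ)))
  rwa [map_neg_eq_map, abs_zr (ω.aM_nonneg i), mul_pow] at this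

lemma summable_sq_add (ω : OmegaHat) : Summable (fun i => ω.aP i ^2 + ω.aM i ^2) :=
  ω.summable_aP_sq.add ω.summable_aM_sq

lemma sum_sq_add_le (ω : OmegaHat) (n : ℕ) :
    ∑ i ∈ range n, (ω.aP i ^2 + ω.aM i ^2) ≤ ω.del := by
  calc ∑ i ∈ range n, (ω.aP i ^2 + ω.aM i ^2) ≤ ∑' i, (ω.aP i ^2 + ω.aM i ^2) :=
        Summable.sum_le_tsum _ (fun i _ => by positivity) (summable_sq_add ω)
    _ = (∑' i, ω.aP i ^2) + ∑' i, ω.aM i ^2 :=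
        Summable.tsum_add ω.summable_aP_sq ω.summable_aM_sq
    _ ≤ ω.del := ω.sum_sq_le

lemma sum_cubeP_le (ω : OmegaHat) (n : ℕ) :
    ∑ i ∈ range n, ω.aP i ^ 3 ≤ Real.sqrt ω.del * ω.del := by
  calc ∑ i ∈ range n, ω.aP i ^ 3 ≤ ∑ i ∈ range n, Real.sqrt ω.del * ω.aP i ^2 := by
        apply Finset.sum_le_sum
        intro i _
        have h := aP_le_sqrt ω i
        have h0 := ω.aP_nonneg i
        nlinarith
    _ = Real.sqrt ω.del * ∑ i ∈ range n, ω.aP i ^2 := by rw [Finset.mul_sum]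
    _ ≤ Real.sqrt ω.del * ω.del := by
        apply mul_le_mul_of_nonneg_left _ (Real.sqrt_nonneg _)
        calc ∑ i ∈ range n, ω.aP i ^2 ≤ ∑' i, ω.aP i ^2 :=
              Summable.sum_le_tsum _ (fun i _ => by positivity) ω.summable_aP_sq
          _ ≤ ω.del := tsumP_le ω

lemma sum_cubeM_le (ω : OmegaHat) (n : ℕ) :
    ∑ i ∈ range n, ω.aM i ^ 3 ≤ Real.sqrt ω.del * ω.del := by
  calc ∑ i ∈ range n, ω.aM i ^ 3 ≤ ∑ i ∈ range n, Real.sqrt ω.del * ω.aM i ^2 := by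
        apply Finset.sum_le_sum
        intro i _
        have h := aM_le_sqrt ω i
        have h0 := ω.aM_nonneg i
        nlinarith
    _ = Real.sqrt ω.del * ∑ i ∈ range n, ω.aM i ^2 := by rw [Finset.mul_sum]
    _ ≤ Real.sqrt ω.del * ω.del := by
        apply mul_le_mul_of_nonneg_left _ (Real.sqrt_nonneg _)
        calc ∑ i ∈ range n, ω.aM i ^2 ≤ ∑' i, ω.aM i ^2 :=
              Summable.sum_le_tsum _ (fun i _ => by positivity) ω.summable_aM_sq
          _ ≤ ω.del := tsumM_le ω

lemma summable_S (ω ω' : OmegaHat) :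
    Summable (fun i => |ω.aP i - ω'.aP i| ^ 3 + |ω.aM i - ω'.aM i| ^ 3) := by
  have hP : Summable (fun i => ω.aP i ^ 3) := by
    refine Summable.of_nonneg_of_le (fun i => pow_nonneg (ω.aP_nonneg i) 3)
      (fun i => ?_) (ω.summable_aP_sq.mul_left (Real.sqrt ω.del))
    have h := aP_le_sqrt ω i; have h0 := ω.aP_nonneg i; nlinarith
  have hP' : Summable (fun i => ω'.aP i ^ 3) := by
    refine Summable.of_nonneg_of_le (fun i => pow_nonneg (ω'.aP_nonneg i) 3)
      (fun i => ?_) (ω'.summable_aP_sq.mul_left (Real.sqrt ω'.del))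
    have h := aP_le_sqrt ω' i; have h0 := ω'.aP_nonneg i; nlinarith
  have hM : Summable (fun i => ω.aM i ^ 3) := by
    refine Summable.of_nonneg_of_le (fun i => pow_nonneg (ω.aM_nonneg i) 3)
      (fun i => ?_) (ω.summable_aM_sq.mul_left (Real.sqrt ω.del))
    have h := aM_le_sqrt ω i; have h0 := ω.aM_nonneg i; nlinarith
  have hM' : Summable (fun i => ω'.aM i ^ 3) := by
    refine Summable.of_nonneg_of_le (fun i => pow_nonneg (ω'.aM_nonneg i) 3)
      (fun i => ?_) (ω'.summable_aM_sq.mul_left (Real.sqrt ω'.del))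
    have h := aM_le_sqrt ω' i; have h0 := ω'.aM_nonneg i; nlinarith
  apply Summable.add
  · refine Summable.of_nonneg_of_le (fun i => by positivity) (fun i => ?_)
      ((hP.add hP').mul_left 4)
    have h0 := ω.aP_nonneg i; have h0' := ω'.aP_nonneg i
    have habs : |ω.aP i - ω'.aP i| ≤ ω.aP i + ω'.aP i := by
      rw [abs_sub_le_iff]; constructor <;> linarith
    have h3 : |ω.aP i - ω'.aP i| ^ 3 ≤ (ω.aP i + ω'.aP i) ^ 3 :=
      pow_le_pow_left₀ (abs_nonneg _) habs 3
    nlinarith [mul_nonneg (sq_nonneg (ω.aP i - ω'.aP i)) (add_nonneg h0 h0')]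
  · refine Summable.of_nonneg_of_le (fun i => by positivity) (fun i => ?_)
      ((hM.add hM').mul_left 4)
    have h0 := ω.aM_nonneg i; have h0' := ω'.aM_nonneg i
    have habs : |ω.aM i - ω'.aM i| ≤ ω.aM i + ω'.aM i := by
      rw [abs_sub_le_iff]; constructor <;> linarith
    have h3 : |ω.aM i - ω'.aM i| ^ 3 ≤ (ω.aM i + ω'.aM i) ^ 3 :=
      pow_le_pow_left₀ (abs_nonneg _) habs 3
    nlinarith [mul_nonneg (sq_nonneg (ω.aM i - ω'.aM i)) (add_nonneg h0 h0')]

lemma abs_AA_le (ω : OmegaHat) (z : ℂ) :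
    Complex.abs (AA ω z) ≤ Real.exp (|ω.g1| * Complex.abs z + ω.del/2 * Complex.abs z ^2) := by
  rw [AA, Complex.abs_exp]
  apply Real.exp_le_exp.2
  calc (-(ω.g1:ℂ)*z - (ω.del:ℂ)/2*z^2).re ≤ Complex.abs (-(ω.g1:ℂ)*z - (ω.del:ℂ)/2*z^2) :=
        Complex.re_le_abs _
    _ ≤ Complex.abs (-(ω.g1:ℂ)*z) + Complex.abs ((ω.del:ℂ)/2*z^2) := Complex.abs.sub_le_add _ _
    _ = |ω.g1| * Complex.abs z + ω.del/2 * Complex.abs z ^2 := by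
        rw [map_mul, map_mul, map_neg_eq_map, Complex.abs_ofReal, map_div₀, Complex.abs_ofReal,
          Complex.abs_two, map_pow, abs_of_nonneg ω.del_nonneg]

lemma abs_AA_sub_le (ω ω' : OmegaHat) (z : ℂ) :
    Complex.abs (AA ω z - AA ω' z) ≤
      Real.exp (|ω.g1| * Complex.abs z + ω.del/2 * Complex.abs z ^2) *
        (Real.exp (|ω.g1 - ω'.g1| * Complex.abs z + |ω.del - ω'.del|/2 * Complex.abs z ^2) - 1) := by
  set u : ℂ := -(ω.g1:ℂ)*z - (ω.del:ℂ)/2*z^2 with hu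
  set u' : ℂ := -(ω'.g1:ℂ)*z - (ω'.del:ℂ)/2*z^2 with hu'
  have hsplit : AA ω z - AA ω' z = AA ω z * (1 - Complex.exp (u' - u)) := by
    rw [AA, AA, ← hu, ← hu', mul_one_sub, ← Complex.exp_add]
    ring_nf
  rw [hsplit, map_mul]
  have h1 : Complex.abs (1 - Complex.exp (u' - u)) ≤
      Real.exp (|ω.g1 - ω'.g1| * Complex.abs z + |ω.del - ω'.del|/2 * Complex.abs z ^2) - 1 := by
    rw [← Complex.abs.map_neg, neg_sub]
    refine le_trans (abs_exp_sub_one_le' _) ?_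
    have h2 : Complex.abs (u' - u) ≤
        |ω.g1 - ω'.g1| * Complex.abs z + |ω.del - ω'.del|/2 * Complex.abs z ^2 := by
      have : u' - u = -((ω'.g1:ℂ) - (ω.g1:ℂ))*z - ((ω'.del:ℂ) - (ω.del:ℂ))/2*z^2 := by
        rw [hu, hu']; ring
      rw [this]
      calc Complex.abs _ ≤ Complex.abs (-((ω'.g1:ℂ) - (ω.g1:ℂ))*z)
            + Complex.abs (((ω'.del:ℂ) - (ω.del:ℂ))/2*z^2) := Complex.abs.sub_le_add _ _
        _ = |ω.g1 - ω'.g1| * Complex.abs z + |ω.del - ω'.del|/2 * Complex.abs z ^2 := by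
            rw [map_mul, map_mul, map_neg_eq_map, map_div₀, map_pow, Complex.abs_two]
            rw [show ((ω'.g1:ℂ) - (ω.g1:ℂ)) = ((ω'.g1 - ω.g1 : ℝ):ℂ) by push_cast; ring]
            rw [show ((ω'.del:ℂ) - (ω.del:ℂ)) = ((ω'.del - ω.del : ℝ):ℂ) by push_cast; ring]
            rw [Complex.abs_ofReal, Complex.abs_ofReal, abs_sub_comm ω'.g1, abs_sub_comm ω'.del]
    linarith [Real.exp_le_exp.2 h2]
  exact mul_le_mul (abs_AA_le ω z) h1 (Complex.abs.nonneg _) (Real.exp_nonneg _)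

lemma rpow23 {X : ℝ} (hX : 0 ≤ X) : (2*X^3) ^ ((2:ℝ)/3) ≤ 2*X^2 := by
  have h1 : (2*X^3)^((2:ℝ)/3) = 2^((2:ℝ)/3) * (X^3)^((2:ℝ)/3) :=
    Real.mul_rpow (by norm_num) (by positivity)
  have h2 : (X^3)^((2:ℝ)/3) = X^2 := by
    rw [← Real.rpow_natCast X 3, ← Real.rpow_mul hX, show ((3:ℕ):ℝ) * ((2:ℝ)/3) = ((2:ℕ):ℝ) by norm_num,
      Real.rpow_natCast]
  have h3 : (2:ℝ)^((2:ℝ)/3) ≤ 2 := by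
    calc (2:ℝ)^((2:ℝ)/3) ≤ 2^(1:ℝ) := Real.rpow_le_rpow_of_exponent_le one_le_two (by norm_num)
      _ = 2 := Real.rpow_one 2
  rw [h1, h2]
  exact mul_le_mul_of_nonneg_right h3 (sq_nonneg X)

lemma expT {T : ℝ} (hT : 0 ≤ T) :
    2*T^2*Real.exp (T + 5/2*T^2) ≤ Real.exp (10*(T+1)^3) := by
  have h1 : 2*T^2 ≤ Real.exp (1 + T^2) := by
    rw [Real.exp_add]
    nlinarith [Real.add_one_le_exp (T^2), Real.exp_one_gt_d9, Real.exp_pos (T^2), sq_nonneg T]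
  calc 2*T^2*Real.exp (T+5/2*T^2) ≤ Real.exp (1+T^2) * Real.exp (T+5/2*T^2) :=
      mul_le_mul_of_nonneg_right h1 (Real.exp_nonneg _)
    _ = Real.exp (1+T^2 + (T+5/2*T^2)) := (Real.exp_add _ _).symm
    _ ≤ Real.exp (10*(T+1)^3) := Real.exp_le_exp.2 (by nlinarith [pow_nonneg hT 3])

set_option maxHeartbeats 2000000 in
lemma prodPQ_diff_le (ω ω' : OmegaHat) (z : ℂ) (n : ℕ) :
    Complex.abs ((∏ i ∈ range n, ff (z * (ω.aP i : ℂ))) * (∏ i ∈ range n, ff (-(z * (ω.aM i : ℂ))))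
      - (∏ i ∈ range n, ff (z * (ω'.aP i : ℂ))) * (∏ i ∈ range n, ff (-(z * (ω'.aM i : ℂ))))) ≤
      Complex.abs z * (∑' i, (|ω.aP i - ω'.aP i| ^ 3 + |ω.aM i - ω'.aM i| ^ 3)) ^ ((1:ℝ)/3) *
        Real.exp (10 * (Complex.abs z * (Real.sqrt ω.del + Real.sqrt ω'.del) + 1)^3) := by
  set r := Complex.abs z with hrdef
  have hr0 : 0 ≤ r := Complex.abs.nonneg z
  set sd := Real.sqrt ω.del with hsddef
  set sd' := Real.sqrt ω'.del with hsd'def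
  have hsd0 : 0 ≤ sd := Real.sqrt_nonneg _
  have hsd0' : 0 ≤ sd' := Real.sqrt_nonneg _
  set T := r * (sd + sd') with hTdef
  have hT0 : 0 ≤ T := by positivity
  set S := ∑' i, (|ω.aP i - ω'.aP i| ^ 3 + |ω.aM i - ω'.aM i| ^ 3) with hSdef
  have hS0 : 0 ≤ S := tsum_nonneg (fun i => by positivity)
  set dP : ℕ → ℝ := fun i => |ω.aP i - ω'.aP i| with hdP
  set dM : ℕ → ℝ := fun i => |ω.aM i - ω'.aM i| with hdM
  set mP : ℕ → ℝ := fun i => max (ω.aP i) (ω'.aP i) with hmP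
  set mM : ℕ → ℝ := fun i => max (ω.aM i) (ω'.aM i) with hmM
  have hmP0 : ∀ i, 0 ≤ mP i := fun i => le_trans (ω.aP_nonneg i) (le_max_left _ _)
  have hmM0 : ∀ i, 0 ≤ mM i := fun i => le_trans (ω.aM_nonneg i) (le_max_left _ _)
  have hmPT : ∀ i, r * mP i ≤ T := by
    intro i
    rw [hTdef]
    apply mul_le_mul_of_nonneg_left _ hr0
    exact max_le (le_trans (aP_le_sqrt ω i) (by linarith)) (le_trans (aP_le_sqrt ω' i) (by linarith))
  have hmMT : ∀ i, r * mM i ≤ T := by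
    intro i
    rw [hTdef]
    apply mul_le_mul_of_nonneg_left _ hr0
    exact max_le (le_trans (aM_le_sqrt ω i) (by linarith)) (le_trans (aM_le_sqrt ω' i) (by linarith))
  -- the combined factor sequences
  set c : ℕ → ℂ := fun i => ff (z * (ω.aP i : ℂ)) * ff (-(z * (ω.aM i : ℂ))) with hcdef
  set c' : ℕ → ℂ := fun i => ff (z * (ω'.aP i : ℂ)) * ff (-(z * (ω'.aM i : ℂ))) with hc'def
  set C : ℕ → ℝ := fun i => Real.exp (r^2*(ω.aP i^2 + ω.aM i^2 + ω'.aP i^2 + ω'.aM i^2)) with hCdef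
  have hC1 : ∀ i, 1 ≤ C i := by
    intro i
    rw [hCdef, ← Real.exp_zero]
    apply Real.exp_le_exp.2
    positivity
  have hc_le : ∀ i, Complex.abs (c i) ≤ C i := by
    intro i
    rw [hcdef, map_mul, hCdef]
    calc Complex.abs (ff (z * (ω.aP i : ℂ))) * Complex.abs (ff (-(z * (ω.aM i : ℂ))))
        ≤ Real.exp (r^2 * ω.aP i^2) * Real.exp (r^2 * ω.aM i^2) :=
          mul_le_mul (abs_ff_zP_le ω z i) (abs_ff_zM_le ω z i) (Complex.abs.nonneg _)
            (Real.exp_nonneg _)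
      _ = Real.exp (r^2 * ω.aP i^2 + r^2 * ω.aM i^2) := (Real.exp_add _ _).symm
      _ ≤ Real.exp (r^2*(ω.aP i^2 + ω.aM i^2 + ω'.aP i^2 + ω'.aM i^2)) := by
          apply Real.exp_le_exp.2
          have h1 := sq_nonneg (ω'.aP i); have h2 := sq_nonneg (ω'.aM i)
          nlinarith [sq_nonneg r]
  have hc'_le : ∀ i, Complex.abs (c' i) ≤ C i := by
    intro i
    rw [hc'def, map_mul, hCdef]
    calc Complex.abs (ff (z * (ω'.aP i : ℂ))) * Complex.abs (ff (-(z * (ω'.aM i : ℂ))))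
        ≤ Real.exp (r^2 * ω'.aP i^2) * Real.exp (r^2 * ω'.aM i^2) :=
          mul_le_mul (abs_ff_zP_le ω' z i) (abs_ff_zM_le ω' z i) (Complex.abs.nonneg _)
            (Real.exp_nonneg _)
      _ = Real.exp (r^2 * ω'.aP i^2 + r^2 * ω'.aM i^2) := (Real.exp_add _ _).symm
      _ ≤ Real.exp (r^2*(ω.aP i^2 + ω.aM i^2 + ω'.aP i^2 + ω'.aM i^2)) := by
          apply Real.exp_le_exp.2
          have h1 := sq_nonneg (ω.aP i); have h2 := sq_nonneg (ω.aM i)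
          nlinarith [sq_nonneg r]
  have hprodC : ∏ i ∈ range n, C i ≤ Real.exp (T^2) := by
    rw [hCdef, ← Real.exp_sum]
    apply Real.exp_le_exp.2
    rw [← Finset.mul_sum]
    have h1 : ∑ i ∈ range n, (ω.aP i^2 + ω.aM i^2 + ω'.aP i^2 + ω'.aM i^2)
        ≤ ω.del + ω'.del := by
      have e1 : ∀ i, ω.aP i^2 + ω.aM i^2 + ω'.aP i^2 + ω'.aM i^2 =
          (ω.aP i^2 + ω.aM i^2) + (ω'.aP i^2 + ω'.aM i^2) := fun i => by ring
      rw [Finset.sum_congr rfl (fun i _ => e1 i), Finset.sum_add_distrib]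
      exact add_le_add (sum_sq_add_le ω n) (sum_sq_add_le ω' n)
    have h2 : ω.del + ω'.del ≤ (sd + sd')^2 := by
      have e1 : sd^2 = ω.del := Real.sq_sqrt ω.del_nonneg
      have e2 : sd'^2 = ω'.del := Real.sq_sqrt ω'.del_nonneg
      nlinarith [mul_nonneg hsd0 hsd0']
    calc r^2 * ∑ i ∈ range n, (ω.aP i^2 + ω.aM i^2 + ω'.aP i^2 + ω'.aM i^2)
        ≤ r^2 * ((sd+sd')^2) := by
          apply mul_le_mul_of_nonneg_left (le_trans h1 h2) (sq_nonneg r)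
      _ = T^2 := by rw [hTdef]; ring
  -- per-index difference bound
  have hcdiff : ∀ i, Complex.abs (c i - c' i) ≤
      Real.exp (T^2 + (T + T^2/2)) * (r^3 * (dP i * mP i^2 + dM i * mM i^2)) := by
    intro i
    have hsplit2 : c i - c' i =
        (ff (z * (ω.aP i : ℂ)) - ff (z * (ω'.aP i : ℂ))) * ff (-(z * (ω.aM i : ℂ)))
        + ff (z * (ω'.aP i : ℂ)) * (ff (-(z * (ω.aM i : ℂ))) - ff (-(z * (ω'.aM i : ℂ)))) := by
      rw [hcdef, hc'def]; ring
    have t1 : Complex.abs (ff (z * (ω.aP i : ℂ)) - ff (z * (ω'.aP i : ℂ))) ≤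
        (r * mP i)^2 * Real.exp (T + T^2/2) * (r * dP i) := by
      have hM0 : 0 ≤ r * mP i := mul_nonneg hr0 (hmP0 i)
      have ha : Complex.abs (z * (ω.aP i : ℂ)) ≤ r * mP i := by
        rw [abs_zr (ω.aP_nonneg i)]
        exact mul_le_mul_of_nonneg_left (le_max_left _ _) hr0
      have hb : Complex.abs (z * (ω'.aP i : ℂ)) ≤ r * mP i := by
        rw [abs_zr (ω'.aP_nonneg i)]
        exact mul_le_mul_of_nonneg_left (le_max_right _ _) hr0
      have habs : Complex.abs (z * (ω.aP i : ℂ) - z * (ω'.aP i : ℂ)) = r * dP i := by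
        rw [show z * (ω.aP i : ℂ) - z * (ω'.aP i : ℂ) = z * ((ω.aP i - ω'.aP i : ℝ) : ℂ) by
          push_cast; ring]
        rw [map_mul, Complex.abs_ofReal]
      have := ff_diff_le hM0 ha hb
      rw [habs] at this
      refine le_trans this ?_
      have hexp : Real.exp (r * mP i + (r * mP i)^2/2) ≤ Real.exp (T + T^2/2) := by
        apply Real.exp_le_exp.2
        have := hmPT i
        nlinarith
      have h1 : 0 ≤ r * dP i := mul_nonneg hr0 (abs_nonneg _)
      calc (r * mP i)^2 * Real.exp (r * mP i + (r * mP i)^2/2) * (r * dP i)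
          ≤ (r * mP i)^2 * Real.exp (T + T^2/2) * (r * dP i) := by
            apply mul_le_mul_of_nonneg_right (mul_le_mul_of_nonneg_left hexp (sq_nonneg _)) h1
        _ = (r * mP i)^2 * Real.exp (T + T^2/2) * (r * dP i) := rfl
    have t4 : Complex.abs (ff (-(z * (ω.aM i : ℂ))) - ff (-(z * (ω'.aM i : ℂ)))) ≤
        (r * mM i)^2 * Real.exp (T + T^2/2) * (r * dM i) := by
      have hM0 : 0 ≤ r * mM i := mul_nonneg hr0 (hmM0 i)
      have ha : Complex.abs (-(z * (ω.aM i : ℂ))) ≤ r * mM i := by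
        rw [map_neg_eq_map, abs_zr (ω.aM_nonneg i)]
        exact mul_le_mul_of_nonneg_left (le_max_left _ _) hr0
      have hb : Complex.abs (-(z * (ω'.aM i : ℂ))) ≤ r * mM i := by
        rw [map_neg_eq_map, abs_zr (ω'.aM_nonneg i)]
        exact mul_le_mul_of_nonneg_left (le_max_right _ _) hr0
      have habs : Complex.abs (-(z * (ω.aM i : ℂ)) - -(z * (ω'.aM i : ℂ))) = r * dM i := by
        rw [show -(z * (ω.aM i : ℂ)) - -(z * (ω'.aM i : ℂ)) =
          z * ((ω'.aM i - ω.aM i : ℝ) : ℂ) by push_cast; ring]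
        rw [map_mul, Complex.abs_ofReal, abs_sub_comm]
      have := ff_diff_le hM0 ha hb
      rw [habs] at this
      refine le_trans this ?_
      have hexp : Real.exp (r * mM i + (r * mM i)^2/2) ≤ Real.exp (T + T^2/2) := by
        apply Real.exp_le_exp.2
        have := hmMT i
        nlinarith
      have h1 : 0 ≤ r * dM i := mul_nonneg hr0 (abs_nonneg _)
      apply mul_le_mul_of_nonneg_right (mul_le_mul_of_nonneg_left hexp (sq_nonneg _)) h1
    have t2 : Complex.abs (ff (-(z * (ω.aM i : ℂ)))) ≤ Real.exp (T^2) := by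
      refine le_trans (abs_ff_zM_le ω z i) (Real.exp_le_exp.2 ?_)
      have := hmMT i
      have h1 : r * ω.aM i ≤ T := le_trans
        (mul_le_mul_of_nonneg_left (le_max_left _ _) hr0) (hmMT i)
      have h2 : 0 ≤ r * ω.aM i := mul_nonneg hr0 (ω.aM_nonneg i)
      nlinarith
    have t3 : Complex.abs (ff (z * (ω'.aP i : ℂ))) ≤ Real.exp (T^2) := by
      refine le_trans (abs_ff_zP_le ω' z i) (Real.exp_le_exp.2 ?_)
      have h1 : r * ω'.aP i ≤ T := le_trans
        (mul_le_mul_of_nonneg_left (le_max_right _ _) hr0) (hmPT i)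
      have h2 : 0 ≤ r * ω'.aP i := mul_nonneg hr0 (ω'.aP_nonneg i)
      nlinarith
    calc Complex.abs (c i - c' i)
        ≤ Complex.abs ((ff (z * (ω.aP i : ℂ)) - ff (z * (ω'.aP i : ℂ))) * ff (-(z * (ω.aM i : ℂ))))
          + Complex.abs (ff (z * (ω'.aP i : ℂ)) * (ff (-(z * (ω.aM i : ℂ))) - ff (-(z * (ω'.aM i : ℂ))))) := by
          rw [hsplit2]; exact Complex.abs.add_le _ _
      _ = Complex.abs (ff (z * (ω.aP i : ℂ)) - ff (z * (ω'.aP i : ℂ))) * Complex.abs (ff (-(z * (ω.aM i : ℂ))))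
          + Complex.abs (ff (z * (ω'.aP i : ℂ))) * Complex.abs (ff (-(z * (ω.aM i : ℂ))) - ff (-(z * (ω'.aM i : ℂ)))) := by
          rw [map_mul, map_mul]
      _ ≤ ((r * mP i)^2 * Real.exp (T + T^2/2) * (r * dP i)) * Real.exp (T^2)
          + Real.exp (T^2) * ((r * mM i)^2 * Real.exp (T + T^2/2) * (r * dM i)) := by
          refine add_le_add (mul_le_mul t1 t2 (Complex.abs.nonneg _) (by positivity))
            (mul_le_mul t3 t4 (Complex.abs.nonneg _) (Real.exp_nonneg _))
      _ = Real.exp (T^2 + (T + T^2/2)) * (r^3 * (dP i * mP i^2 + dM i * mM i^2)) := by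
          rw [Real.exp_add (T^2) (T + T^2/2)]; ring
  -- sum the per-index bounds, apply Hölder
  have hsum : ∑ i ∈ range n, (dP i * mP i^2 + dM i * mM i^2) ≤
      S ^ ((1:ℝ)/3) * (2*(sd+sd')^3) ^ ((2:ℝ)/3) := by
    rw [Finset.sum_add_distrib]
    have hH1 := holder3 (range n) dP mP (fun i => abs_nonneg _) hmP0
    have hH2 := holder3 (range n) dM mM (fun i => abs_nonneg _) hmM0
    have hH3 := holder2 (Finset.sum_nonneg (fun i _ => pow_nonneg (abs_nonneg _) 3))
      (Finset.sum_nonneg (fun i (_ : i ∈ range n) => pow_nonneg (hmP0 i) 3))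
      (Finset.sum_nonneg (fun i _ => pow_nonneg (abs_nonneg _) 3))
      (Finset.sum_nonneg (fun i (_ : i ∈ range n) => pow_nonneg (hmM0 i) 3))
      (a := ∑ i ∈ range n, dP i ^3) (b := ∑ i ∈ range n, mP i ^3)
      (c := ∑ i ∈ range n, dM i ^3) (e := ∑ i ∈ range n, mM i ^3)
    have hd3 : ∑ i ∈ range n, dP i ^3 + ∑ i ∈ range n, dM i ^3 ≤ S := by
      rw [← Finset.sum_add_distrib]
      exact Summable.sum_le_tsum _ (fun i _ => by positivity) (summable_S ω ω')
    have hm3 : ∑ i ∈ range n, mP i ^3 + ∑ i ∈ range n, mM i ^3 ≤ 2*(sd+sd')^3 := by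
      have hmPc : ∑ i ∈ range n, mP i ^3 ≤ sd * ω.del + sd' * ω'.del := by
        calc ∑ i ∈ range n, mP i ^3 ≤ ∑ i ∈ range n, (ω.aP i^3 + ω'.aP i^3) := by
              apply Finset.sum_le_sum
              intro i _
              rcases max_cases (ω.aP i) (ω'.aP i) with ⟨h,_⟩|⟨h,_⟩ <;> rw [hmP] <;> simp only [] <;>
                rw [h] <;> nlinarith [pow_nonneg (ω.aP_nonneg i) 3, pow_nonneg (ω'.aP_nonneg i) 3]
          _ = ∑ i ∈ range n, ω.aP i^3 + ∑ i ∈ range n, ω'.aP i^3 := Finset.sum_add_distrib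
          _ ≤ sd * ω.del + sd' * ω'.del := add_le_add (sum_cubeP_le ω n) (sum_cubeP_le ω' n)
      have hmMc : ∑ i ∈ range n, mM i ^3 ≤ sd * ω.del + sd' * ω'.del := by
        calc ∑ i ∈ range n, mM i ^3 ≤ ∑ i ∈ range n, (ω.aM i^3 + ω'.aM i^3) := by
              apply Finset.sum_le_sum
              intro i _
              rcases max_cases (ω.aM i) (ω'.aM i) with ⟨h,_⟩|⟨h,_⟩ <;> rw [hmM] <;> simp only [] <;>
                rw [h] <;> nlinarith [pow_nonneg (ω.aM_nonneg i) 3, pow_nonneg (ω'.aM_nonneg i) 3]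
          _ = ∑ i ∈ range n, ω.aM i^3 + ∑ i ∈ range n, ω'.aM i^3 := Finset.sum_add_distrib
          _ ≤ sd * ω.del + sd' * ω'.del := add_le_add (sum_cubeM_le ω n) (sum_cubeM_le ω' n)
      have e1 : sd^2 = ω.del := Real.sq_sqrt ω.del_nonneg
      have e2 : sd'^2 = ω'.del := Real.sq_sqrt ω'.del_nonneg
      nlinarith [mul_nonneg hsd0 hsd0', mul_nonneg (mul_nonneg hsd0 hsd0) hsd0',
        mul_nonneg (mul_nonneg hsd0 hsd0') hsd0']
    calc ∑ i ∈ range n, dP i * mP i^2 + ∑ i ∈ range n, dM i * mM i^2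
        ≤ (∑ i ∈ range n, dP i ^3) ^ ((1:ℝ)/3) * (∑ i ∈ range n, mP i ^3) ^ ((2:ℝ)/3)
          + (∑ i ∈ range n, dM i ^3) ^ ((1:ℝ)/3) * (∑ i ∈ range n, mM i ^3) ^ ((2:ℝ)/3) :=
          add_le_add hH1 hH2
      _ ≤ (∑ i ∈ range n, dP i ^3 + ∑ i ∈ range n, dM i ^3) ^ ((1:ℝ)/3) *
          (∑ i ∈ range n, mP i ^3 + ∑ i ∈ range n, mM i ^3) ^ ((2:ℝ)/3) := hH3
      _ ≤ S ^ ((1:ℝ)/3) * (2*(sd+sd')^3) ^ ((2:ℝ)/3) := by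
          have hd0 : (0:ℝ) ≤ ∑ i ∈ range n, dP i ^3 + ∑ i ∈ range n, dM i ^3 :=
            add_nonneg (Finset.sum_nonneg (fun i _ => pow_nonneg (abs_nonneg _) 3))
              (Finset.sum_nonneg (fun i _ => pow_nonneg (abs_nonneg _) 3))
          have hm0 : (0:ℝ) ≤ ∑ i ∈ range n, mP i ^3 + ∑ i ∈ range n, mM i ^3 :=
            add_nonneg (Finset.sum_nonneg (fun i _ => pow_nonneg (hmP0 i) 3))
              (Finset.sum_nonneg (fun i _ => pow_nonneg (hmM0 i) 3))
          apply mul_le_mul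
          · exact Real.rpow_le_rpow hd0 hd3 (by norm_num)
          · exact Real.rpow_le_rpow hm0 hm3 (by norm_num)
          · exact Real.rpow_nonneg hm0 _
          · exact Real.rpow_nonneg (le_trans hd0 hd3) _
  -- put everything together
  have hmain := prod_diff_le c c' C hC1 hc_le hc'_le n
  have hsum2 : ∑ i ∈ range n, Complex.abs (c i - c' i) ≤
      Real.exp (T^2 + (T + T^2/2)) * (r^3 * (S ^ ((1:ℝ)/3) * (2*(sd+sd')^3) ^ ((2:ℝ)/3))) := by
    calc ∑ i ∈ range n, Complex.abs (c i - c' i)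
        ≤ ∑ i ∈ range n, Real.exp (T^2 + (T + T^2/2)) * (r^3 * (dP i * mP i^2 + dM i * mM i^2)) :=
          Finset.sum_le_sum (fun i _ => hcdiff i)
      _ = Real.exp (T^2 + (T + T^2/2)) * (r^3 * ∑ i ∈ range n, (dP i * mP i^2 + dM i * mM i^2)) := by
          rw [← Finset.mul_sum, ← Finset.mul_sum]
      _ ≤ Real.exp (T^2 + (T + T^2/2)) * (r^3 * (S ^ ((1:ℝ)/3) * (2*(sd+sd')^3) ^ ((2:ℝ)/3))) := by
          apply mul_le_mul_of_nonneg_left _ (Real.exp_nonneg _)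
          exact mul_le_mul_of_nonneg_left hsum (by positivity)
  have hPQ : (∏ i ∈ range n, ff (z * (ω.aP i : ℂ))) * (∏ i ∈ range n, ff (-(z * (ω.aM i : ℂ))))
      = ∏ i ∈ range n, c i := by rw [← Finset.prod_mul_distrib]
  have hPQ' : (∏ i ∈ range n, ff (z * (ω'.aP i : ℂ))) * (∏ i ∈ range n, ff (-(z * (ω'.aM i : ℂ))))
      = ∏ i ∈ range n, c' i := by rw [← Finset.prod_mul_distrib]
  rw [hPQ, hPQ']
  calc Complex.abs (∏ i ∈ range n, c i - ∏ i ∈ range n, c' i)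
      ≤ (∏ i ∈ range n, C i) * ∑ i ∈ range n, Complex.abs (c i - c' i) := hmain
    _ ≤ Real.exp (T^2) * (Real.exp (T^2 + (T + T^2/2)) * (r^3 * (S ^ ((1:ℝ)/3) * (2*(sd+sd')^3) ^ ((2:ℝ)/3)))) := by
        apply mul_le_mul hprodC hsum2 (Finset.sum_nonneg (fun i _ => Complex.abs.nonneg _))
          (Real.exp_nonneg _)
    _ ≤ r * S ^ ((1:ℝ)/3) * Real.exp (10*(T+1)^3) := by
        have h23 := rpow23 (add_nonneg hsd0 hsd0')
        have hstep : Real.exp (T^2) * Real.exp (T^2 + (T + T^2/2)) = Real.exp (T + 5/2*T^2) := by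
          rw [← Real.exp_add]; ring_nf
        have hrT : r^3 * (sd+sd')^2 = r * T^2 := by rw [hTdef]; ring
        have hfin : Real.exp (T^2) * (Real.exp (T^2 + (T + T^2/2)) * (r^3 * (S ^ ((1:ℝ)/3) * (2*(sd+sd')^3) ^ ((2:ℝ)/3))))
            ≤ Real.exp (T + 5/2*T^2) * (r^3 * (S ^ ((1:ℝ)/3) * (2*(sd+sd')^2))) := by
          rw [← mul_assoc, hstep]
          apply mul_le_mul_of_nonneg_left _ (Real.exp_nonneg _)
          apply mul_le_mul_of_nonneg_left _ (by positivity)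
          exact mul_le_mul_of_nonneg_left h23 (Real.rpow_nonneg hS0 _)
        refine le_trans hfin ?_
        have : Real.exp (T + 5/2*T^2) * (r^3 * (S ^ ((1:ℝ)/3) * (2*(sd+sd')^2)))
            = (r * S ^ ((1:ℝ)/3)) * (2*T^2*Real.exp (T + 5/2*T^2)) := by
          rw [hTdef]; ring
        rw [this]
        calc (r * S ^ ((1:ℝ)/3)) * (2*T^2*Real.exp (T + 5/2*T^2))
            ≤ (r * S ^ ((1:ℝ)/3)) * Real.exp (10*(T+1)^3) :=
              mul_le_mul_of_nonneg_left (expT hT0) (by positivity)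
          _ = r * S ^ ((1:ℝ)/3) * Real.exp (10*(T+1)^3) := rfl

set_option maxHeartbeats 1000000 in
lemma key_bound (ω ω' : OmegaHat) (z : ℂ) (n : ℕ) :
    Complex.abs (AA ω z * (∏ i ∈ range n, ff (z * (ω.aP i : ℂ)))
        * (∏ i ∈ range n, ff (-(z * (ω.aM i : ℂ))))
      - AA ω' z * (∏ i ∈ range n, ff (z * (ω'.aP i : ℂ)))
        * (∏ i ∈ range n, ff (-(z * (ω'.aM i : ℂ))))) ≤
      Real.exp (|ω.g1| * Complex.abs z + 5 * ω.del * Complex.abs z ^ 2) *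
        (Real.exp (|ω.g1 - ω'.g1| * Complex.abs z +
          |ω.del - ω'.del| / 2 * Complex.abs z ^ 2) - 1)
      + Complex.abs z *
          (∑' i, (|ω.aP i - ω'.aP i| ^ 3 + |ω.aM i - ω'.aM i| ^ 3)) ^ ((1 : ℝ) / 3) *
          Real.exp (|ω'.g1| * Complex.abs z + ω'.del / 2 * Complex.abs z ^ 2 +
            10 * (Complex.abs z * (Real.sqrt ω.del + Real.sqrt ω'.del) + 1) ^ 3) := by
  set r := Complex.abs z with hrdef
  have hr0 : 0 ≤ r := Complex.abs.nonneg z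
  set P := ∏ i ∈ range n, ff (z * (ω.aP i : ℂ)) with hP
  set Q := ∏ i ∈ range n, ff (-(z * (ω.aM i : ℂ))) with hQ
  set P' := ∏ i ∈ range n, ff (z * (ω'.aP i : ℂ)) with hP'
  set Q' := ∏ i ∈ range n, ff (-(z * (ω'.aM i : ℂ))) with hQ'
  have habsP : Complex.abs P ≤ Real.exp (r^2 * ω.del) := by
    rw [hP, map_prod]
    calc ∏ i ∈ range n, Complex.abs (ff (z * (ω.aP i : ℂ)))
        ≤ ∏ i ∈ range n, Real.exp (r^2 * ω.aP i ^2) :=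
          Finset.prod_le_prod (fun i _ => Complex.abs.nonneg _) (fun i _ => abs_ff_zP_le ω z i)
      _ = Real.exp (∑ i ∈ range n, r^2 * ω.aP i ^2) := (Real.exp_sum _ _).symm
      _ ≤ Real.exp (r^2 * ω.del) := by
          apply Real.exp_le_exp.2
          rw [← Finset.mul_sum]
          apply mul_le_mul_of_nonneg_left _ (sq_nonneg r)
          calc ∑ i ∈ range n, ω.aP i ^2 ≤ ∑' i, ω.aP i ^2 :=
                Summable.sum_le_tsum _ (fun i _ => sq_nonneg _) ω.summable_aP_sq
            _ ≤ ω.del := tsumP_le ω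
  have habsQ : Complex.abs Q ≤ Real.exp (r^2 * ω.del) := by
    rw [hQ, map_prod]
    calc ∏ i ∈ range n, Complex.abs (ff (-(z * (ω.aM i : ℂ))))
        ≤ ∏ i ∈ range n, Real.exp (r^2 * ω.aM i ^2) :=
          Finset.prod_le_prod (fun i _ => Complex.abs.nonneg _) (fun i _ => abs_ff_zM_le ω z i)
      _ = Real.exp (∑ i ∈ range n, r^2 * ω.aM i ^2) := (Real.exp_sum _ _).symm
      _ ≤ Real.exp (r^2 * ω.del) := by
          apply Real.exp_le_exp.2
          rw [← Finset.mul_sum]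
          apply mul_le_mul_of_nonneg_left _ (sq_nonneg r)
          calc ∑ i ∈ range n, ω.aM i ^2 ≤ ∑' i, ω.aM i ^2 :=
                Summable.sum_le_tsum _ (fun i _ => sq_nonneg _) ω.summable_aM_sq
            _ ≤ ω.del := tsumM_le ω
  have hsplit : AA ω z * P * Q - AA ω' z * P' * Q' =
      (AA ω z - AA ω' z) * (P * Q) + AA ω' z * (P * Q - P' * Q') := by ring
  have hD0 : 0 ≤ Real.exp (|ω.g1 - ω'.g1| * r + |ω.del - ω'.del|/2 * r^2) - 1 := by
    have : (1:ℝ) = Real.exp 0 := Real.exp_zero.symm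
    rw [this]
    have : (0:ℝ) ≤ |ω.g1 - ω'.g1| * r + |ω.del - ω'.del|/2 * r^2 := by positivity
    linarith [Real.exp_le_exp.2 this]
  have term1 : Complex.abs ((AA ω z - AA ω' z) * (P * Q)) ≤
      Real.exp (|ω.g1| * r + 5 * ω.del * r^2) *
        (Real.exp (|ω.g1 - ω'.g1| * r + |ω.del - ω'.del|/2 * r^2) - 1) := by
    rw [map_mul, map_mul]
    calc Complex.abs (AA ω z - AA ω' z) * (Complex.abs P * Complex.abs Q)
        ≤ (Real.exp (|ω.g1| * r + ω.del/2 * r^2) *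
            (Real.exp (|ω.g1 - ω'.g1| * r + |ω.del - ω'.del|/2 * r^2) - 1)) *
          (Real.exp (r^2 * ω.del) * Real.exp (r^2 * ω.del)) := by
          apply mul_le_mul (abs_AA_sub_le ω ω' z)
          · exact mul_le_mul habsP habsQ (Complex.abs.nonneg _) (Real.exp_nonneg _)
          · exact mul_nonneg (Complex.abs.nonneg _) (Complex.abs.nonneg _)
          · exact mul_nonneg (Real.exp_nonneg _) hD0
      _ ≤ Real.exp (|ω.g1| * r + 5 * ω.del * r^2) *
            (Real.exp (|ω.g1 - ω'.g1| * r + |ω.del - ω'.del|/2 * r^2) - 1) := by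
          have he : Real.exp (|ω.g1| * r + ω.del/2 * r^2) * (Real.exp (r^2 * ω.del) *
              Real.exp (r^2 * ω.del)) ≤ Real.exp (|ω.g1| * r + 5 * ω.del * r^2) := by
            rw [← Real.exp_add, ← Real.exp_add]
            apply Real.exp_le_exp.2
            have h1 : 0 ≤ ω.del * r^2 := mul_nonneg ω.del_nonneg (sq_nonneg r)
            nlinarith
          calc (Real.exp (|ω.g1| * r + ω.del/2 * r^2) *
              (Real.exp (|ω.g1 - ω'.g1| * r + |ω.del - ω'.del|/2 * r^2) - 1)) *
              (Real.exp (r^2 * ω.del) * Real.exp (r^2 * ω.del))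
              = (Real.exp (|ω.g1| * r + ω.del/2 * r^2) * (Real.exp (r^2 * ω.del) *
                  Real.exp (r^2 * ω.del))) *
                (Real.exp (|ω.g1 - ω'.g1| * r + |ω.del - ω'.del|/2 * r^2) - 1) := by ring
            _ ≤ Real.exp (|ω.g1| * r + 5 * ω.del * r^2) *
                (Real.exp (|ω.g1 - ω'.g1| * r + |ω.del - ω'.del|/2 * r^2) - 1) :=
                mul_le_mul_of_nonneg_right he hD0
  have term2 : Complex.abs (AA ω' z * (P * Q - P' * Q')) ≤
      r * (∑' i, (|ω.aP i - ω'.aP i| ^ 3 + |ω.aM i - ω'.aM i| ^ 3)) ^ ((1 : ℝ) / 3) *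
        Real.exp (|ω'.g1| * r + ω'.del / 2 * r ^ 2 +
          10 * (r * (Real.sqrt ω.del + Real.sqrt ω'.del) + 1) ^ 3) := by
    rw [map_mul]
    have h2 := prodPQ_diff_le ω ω' z n
    have hS0 : (0:ℝ) ≤ (∑' i, (|ω.aP i - ω'.aP i| ^ 3 + |ω.aM i - ω'.aM i| ^ 3)) ^ ((1:ℝ)/3) :=
      Real.rpow_nonneg (tsum_nonneg (fun i => by positivity)) _
    calc Complex.abs (AA ω' z) * Complex.abs (P * Q - P' * Q')
        ≤ Real.exp (|ω'.g1| * r + ω'.del/2 * r^2) *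
          (r * (∑' i, (|ω.aP i - ω'.aP i| ^ 3 + |ω.aM i - ω'.aM i| ^ 3)) ^ ((1:ℝ)/3) *
            Real.exp (10 * (r * (Real.sqrt ω.del + Real.sqrt ω'.del) + 1)^3)) := by
          apply mul_le_mul (abs_AA_le ω' z) h2 (Complex.abs.nonneg _) (Real.exp_nonneg _)
      _ = r * (∑' i, (|ω.aP i - ω'.aP i| ^ 3 + |ω.aM i - ω'.aM i| ^ 3)) ^ ((1:ℝ)/3) *
          Real.exp (|ω'.g1| * r + ω'.del / 2 * r ^ 2 +
            10 * (r * (Real.sqrt ω.del + Real.sqrt ω'.del) + 1) ^ 3) := by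
          rw [Real.exp_add (|ω'.g1| * r + ω'.del / 2 * r ^ 2)
            (10 * (r * (Real.sqrt ω.del + Real.sqrt ω'.del) + 1) ^ 3)]
          ring
  calc Complex.abs (AA ω z * P * Q - AA ω' z * P' * Q')
      ≤ Complex.abs ((AA ω z - AA ω' z) * (P * Q)) +
        Complex.abs (AA ω' z * (P * Q - P' * Q')) := by
        rw [hsplit]; exact Complex.abs.add_le _ _
    _ ≤ _ := add_le_add term1 term2

/-- quantitative comparison of E_ω and E_ω̃: there is an absolute
constant L > 0 such that for all ω, ω̃ ∈ Ω̂ and z ∈ ℂ the stated bound holds. -/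
theorem stmt9 : ∃ L : ℝ, 0 < L ∧ ∀ (ω ω' : OmegaHat) (z : ℂ),
    ‖Eomega ω z - Eomega ω' z‖ ≤
      Real.exp (|ω.g1| * ‖z‖ + 5 * ω.del * ‖z‖ ^ 2) *
        (Real.exp (|ω.g1 - ω'.g1| * ‖z‖ +
          |ω.del - ω'.del| / 2 * ‖z‖ ^ 2) - 1)
      + ‖z‖ *
          (∑' i, (|ω.aP i - ω'.aP i| ^ 3 + |ω.aM i - ω'.aM i| ^ 3)) ^ ((1 : ℝ) / 3) *
          Real.exp (|ω'.g1| * ‖z‖ + ω'.del / 2 * ‖z‖ ^ 2 +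
            L * (‖z‖ * (Real.sqrt ω.del + Real.sqrt ω'.del) + 1) ^ 3) := by
  refine ⟨10, by norm_num, fun ω ω' z => ?_⟩
  have h1 := tendsto_finprod ω z
  have h2 := tendsto_finprod ω' z
  have h3 : Tendsto (fun n => Complex.abs
      (AA ω z * (∏ i ∈ range n, ff (z * (ω.aP i : ℂ)))
        * (∏ i ∈ range n, ff (-(z * (ω.aM i : ℂ))))
      - AA ω' z * (∏ i ∈ range n, ff (z * (ω'.aP i : ℂ)))
        * (∏ i ∈ range n, ff (-(z * (ω'.aM i : ℂ)))))) atTop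
      (𝓝 (Complex.abs (Eomega ω z - Eomega ω' z))) :=
    (Complex.continuous_abs.tendsto _).comp (h1.sub h2)
  exact le_of_tendsto h3 (Filter.Eventually.of_forall (fun n => key_bound ω ω' z n))
end

section
/- Let ω = (α⁺, α⁻, γ₁, δ) ∈ Ω̂ and define f_ω(z) = ∏_{i=1}^∞ (1 − zα_i⁺) e^{zα_i⁺ + (z²/2)(α_i⁺)²} ∏_{i=1}^∞ (1 + zα_i⁻) e^{−zα_i⁻ + (z²/2)(α_i⁻)²}. Then for every z ∈ ℂ, |f_ω(z)| ≤ e^{(9/2) δ |z|²}. -/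
open Filter Topology Finset

/-- f_ω(z) = ∏ (1 − zα_i⁺) e^{zα_i⁺ + (z²/2)(α_i⁺)²} ∏ (1 + zα_i⁻) e^{−zα_i⁻ + (z²/2)(α_i⁻)²}. -/
noncomputable def fOmega (ω : OmegaHat) (z : ℂ) : ℂ :=
  (∏' i, ((1 - z * (ω.aP i : ℂ)) *
    Complex.exp (z * (ω.aP i : ℂ) + z ^ 2 / 2 * ((ω.aP i : ℂ)) ^ 2))) *
  (∏' i, ((1 + z * (ω.aM i : ℂ)) *
    Complex.exp (-(z * (ω.aM i : ℂ)) + z ^ 2 / 2 * ((ω.aM i : ℂ)) ^ 2)))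


lemma key_factor (w : ℂ) :
    ‖(1 - w) * Complex.exp (w + w ^ 2 / 2)‖ ≤ Real.exp (‖w‖ ^ 2) := by
  rw [norm_mul, Complex.norm_exp]
  have hsq : ‖1 - w‖ ^ 2 = 1 + (-2 * w.re + ‖w‖ ^ 2) := by
    rw [← Complex.normSq_eq_norm_sq, ← Complex.normSq_eq_norm_sq]
    simp only [Complex.normSq_apply, Complex.sub_re, Complex.sub_im, Complex.one_re,
      Complex.one_im]
    ring
  have h1 : ‖1 - w‖ ≤ Real.exp ((-2 * w.re + ‖w‖ ^ 2) / 2) := by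
    have h2 : ‖1 - w‖ ^ 2 ≤ Real.exp (-2 * w.re + ‖w‖ ^ 2) := by
      rw [hsq]; linarith [Real.add_one_le_exp (-2 * w.re + ‖w‖ ^ 2)]
    have h4 := Real.sqrt_le_sqrt h2
    have h5 : Real.exp (-2 * w.re + ‖w‖ ^ 2) =
        Real.exp ((-2 * w.re + ‖w‖ ^ 2) / 2) ^ 2 := by
      rw [pow_two (Real.exp ((-2 * w.re + ‖w‖ ^ 2) / 2)), ← Real.exp_add, add_halves]
    rwa [Real.sqrt_sq (norm_nonneg _), h5,
      Real.sqrt_sq (Real.exp_nonneg _)] at h4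
  have hre : (w + w ^ 2 / 2).re ≤ w.re + ‖w‖ ^ 2 / 2 := by
    have h5 : (w ^ 2).re ≤ ‖w‖ ^ 2 := by
      have := Complex.re_le_norm (w ^ 2)
      rwa [norm_pow] at this
    have h6 : (w + w ^ 2 / 2).re = w.re + (w ^ 2).re / 2 := by
      simp [Complex.add_re, Complex.div_re, Complex.normSq]
    rw [h6]; linarith
  refine le_trans (mul_le_mul h1 (Real.exp_le_exp.mpr hre) (Real.exp_nonneg _)
    (Real.exp_nonneg _)) ?_
  rw [← Real.exp_add]
  exact Real.exp_le_exp.mpr (le_of_eq (by ring))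

lemma abs_tprod_le (g : ℕ → ℂ) (c : ℕ → ℝ) (hc : ∀ i, 0 ≤ c i) (hsum : Summable c)
    (h : ∀ i, ‖g i‖ ≤ Real.exp (c i)) :
    ‖∏' i, g i‖ ≤ Real.exp (∑' i, c i) := by
  by_cases hm : Multipliable g
  · have ht : Tendsto (fun s : Finset ℕ => ‖∏ i ∈ s, g i‖) atTop
        (nhds (‖∏' i, g i‖)) :=
      (continuous_norm.tendsto _).comp hm.hasProd
    refine le_of_tendsto ht (Filter.Eventually.of_forall fun s => ?_)
    calc ‖∏ i ∈ s, g i‖ = ∏ i ∈ s, ‖g i‖ := norm_prod _ _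
      _ ≤ ∏ i ∈ s, Real.exp (c i) :=
        Finset.prod_le_prod (fun i _ => norm_nonneg _) (fun i _ => h i)
      _ = Real.exp (∑ i ∈ s, c i) := (Real.exp_sum s c).symm
      _ ≤ Real.exp (∑' i, c i) := Real.exp_le_exp.mpr (Summable.sum_le_tsum s (fun i _ => hc i) hsum)
  · rw [tprod_eq_one_of_not_multipliable hm]
    simpa using Real.one_le_exp (tsum_nonneg hc)

/-- |f_ω(z)| ≤ e^{(9/2) δ |z|²} for every z ∈ ℂ. -/
theorem stmt10 (ω : OmegaHat) (z : ℂ) :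
    ‖fOmega ω z‖ ≤ Real.exp (9 / 2 * ω.del * ‖z‖ ^ 2) := by
  have hz2 : (0:ℝ) ≤ ‖z‖ ^ 2 := sq_nonneg _
  have habsw : ∀ a : ℝ, 0 ≤ a → ‖z * (a:ℂ)‖ ^ 2 = ‖z‖ ^ 2 * a ^ 2 := by
    intro a ha
    rw [norm_mul, Complex.norm_real, Real.norm_eq_abs, abs_of_nonneg ha, mul_pow]
  have hP : ‖∏' i, ((1 - z * (ω.aP i : ℂ)) *
      Complex.exp (z * (ω.aP i : ℂ) + z ^ 2 / 2 * ((ω.aP i : ℂ)) ^ 2))‖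
      ≤ Real.exp (∑' i, ‖z‖ ^ 2 * ω.aP i ^ 2) := by
    refine abs_tprod_le _ (fun i => ‖z‖ ^ 2 * ω.aP i ^ 2)
      (fun i => mul_nonneg hz2 (sq_nonneg _)) (ω.summable_aP_sq.mul_left _) fun i => ?_
    have := key_factor (z * (ω.aP i : ℂ))
    rw [habsw _ (ω.aP_nonneg i)] at this
    convert this using 3
    ring
  have hM : ‖∏' i, ((1 + z * (ω.aM i : ℂ)) *
      Complex.exp (-(z * (ω.aM i : ℂ)) + z ^ 2 / 2 * ((ω.aM i : ℂ)) ^ 2))‖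
      ≤ Real.exp (∑' i, ‖z‖ ^ 2 * ω.aM i ^ 2) := by
    refine abs_tprod_le _ (fun i => ‖z‖ ^ 2 * ω.aM i ^ 2)
      (fun i => mul_nonneg hz2 (sq_nonneg _)) (ω.summable_aM_sq.mul_left _) fun i => ?_
    have := key_factor (-(z * (ω.aM i : ℂ)))
    rw [norm_neg, habsw _ (ω.aM_nonneg i)] at this
    convert this using 3
    · ring
    · ring
  rw [fOmega, norm_mul]
  calc ‖_‖ * ‖_‖
      ≤ Real.exp (∑' i, ‖z‖ ^ 2 * ω.aP i ^ 2) *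
        Real.exp (∑' i, ‖z‖ ^ 2 * ω.aM i ^ 2) :=
      mul_le_mul hP hM (norm_nonneg _) (Real.exp_nonneg _)
    _ ≤ Real.exp (9 / 2 * ω.del * ‖z‖ ^ 2) := by
      rw [← Real.exp_add, tsum_mul_left, tsum_mul_left]
      apply Real.exp_le_exp.mpr
      have h1 := ω.sum_sq_le
      have h2 := ω.del_nonneg
      nlinarith
end

section
/- Let ω = (α⁺, α⁻, γ₁, δ) ∈ Ω̂ and suppose that γ₂ = 0 and γ₁ = lim_{R→∞} (∑_{i : α_i⁺ > R^{−2}} α_i⁺ − ∑_{i : α_i⁻ > R^{−2}} α_i⁻) (a principal value sum). Then for every z ∈ ℂ, E_ω(z) = lim_{R→∞} ∏_{i : α_i⁺ > R^{−2}} (1 − α_i⁺ z) · ∏_{i : α_i⁻ > R^{−2}} (1 + α_i⁻ z). -/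
open Filter Topology Finset

lemma key_bound_s17 {y : ℂ} (hy : ‖y‖ ≤ 1) : ‖Complex.exp y * (1 - y) - 1‖ ≤ 3 * ‖y‖ ^ 2 := by
  have h1 : Complex.exp y * (1 - y) - 1
      = (Complex.exp y - 1 - y) - y * (Complex.exp y - 1) := by ring
  rw [h1]
  have h2 : ‖Complex.exp y - 1 - y‖ ≤ ‖y‖ ^ 2 := by
    simpa using Complex.norm_exp_sub_one_sub_id_le (by simpa using hy)
  have h3 : ‖Complex.exp y - 1‖ ≤ 2 * ‖y‖ := by
    simpa using Complex.norm_exp_sub_one_le (by simpa using hy)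
  calc ‖(Complex.exp y - 1 - y) - y * (Complex.exp y - 1)‖
      ≤ ‖Complex.exp y - 1 - y‖ + ‖y * (Complex.exp y - 1)‖ := norm_sub_le _ _
    _ ≤ ‖y‖ ^ 2 + ‖y‖ * (2 * ‖y‖) := by
        rw [norm_mul]
        exact add_le_add h2 (mul_le_mul_of_nonneg_left h3 (norm_nonneg _))
    _ = 3 * ‖y‖ ^ 2 := by ring

lemma hasProd_zero_of_exists_zero {f : ℕ → ℂ} (h : ∃ i, f i = 0) : HasProd f 0 := by
  obtain ⟨i0, h0⟩ := h
  have hev : ∀ᶠ s : Finset ℕ in atTop, ∏ i ∈ s, f i = 0 := by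
    filter_upwards [Filter.eventually_ge_atTop ({i0} : Finset ℕ)] with s hs
    exact Finset.prod_eq_zero (by simpa using hs) h0
  exact Tendsto.congr' (by filter_upwards [hev] with s hs; exact hs.symm) tendsto_const_nhds

noncomputable def Eterm (c : ℂ) (a : ℕ → ℝ) (i : ℕ) : ℂ :=
  Complex.exp (c * a i) * (1 - c * a i)

lemma Eterm_of_zero {c : ℂ} {a : ℕ → ℝ} {i : ℕ} (h : a i = 0) : Eterm c a i = 1 := by
  simp [Eterm, h]

lemma tendsto_a (a : ℕ → ℝ) (ha0 : ∀ i, 0 ≤ a i)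
    (hsq : Summable fun i => a i ^ 2) : Tendsto a atTop (𝓝 0) := by
  have h1 : Tendsto (fun i => a i ^ 2) atTop (𝓝 0) := hsq.tendsto_atTop_zero
  have h2 : Tendsto (fun i => Real.sqrt (a i ^ 2)) atTop (𝓝 0) := by
    simpa [Function.comp_def] using (Real.continuous_sqrt.tendsto 0).comp h1
  have h3 : (fun i => Real.sqrt (a i ^ 2)) = a := by
    funext i; exact Real.sqrt_sq (ha0 i)
  rwa [h3] at h2

/-- the cut function -/
noncomputable def ncut (a : ℕ → ℝ) (R : ℝ) : ℕ := sInf {n | a n ≤ R⁻¹ ^ 2}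

lemma ncut_spec (a : ℕ → ℝ) (ha0 : ∀ i, 0 ≤ a i) (hmono : Antitone a)
    (hsq : Summable fun i => a i ^ 2) {R : ℝ} (hR : 1 ≤ R) :
    ∀ i, (R⁻¹ ^ 2 < a i ↔ i < ncut a R) := by
  have hRpos : (0 : ℝ) < R⁻¹ ^ 2 := by positivity
  have hne : {n | a n ≤ R⁻¹ ^ 2}.Nonempty := by
    obtain ⟨n, hn⟩ := ((tendsto_a a ha0 hsq).eventually
      (eventually_le_nhds hRpos)).exists
    exact ⟨n, hn⟩
  intro i
  constructor
  · intro h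
    by_contra hc
    push_neg at hc
    have := hmono hc
    have h2 : a (ncut a R) ≤ R⁻¹ ^ 2 := Nat.sInf_mem hne
    linarith
  · intro h
    have : i ∉ {n | a n ≤ R⁻¹ ^ 2} := Nat.notMem_of_lt_sInf h
    simp only [Set.mem_setOf_eq] at this
    exact lt_of_not_ge this

lemma multipliable_Eterm (a : ℕ → ℝ) (ha0 : ∀ i, 0 ≤ a i) (hmono : Antitone a)
    (hsq : Summable fun i => a i ^ 2) (c : ℂ) : Multipliable (Eterm c a) := by
  by_cases h0 : ∃ i, a i = 0
  · -- finitely supported case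
    obtain ⟨N, hN⟩ := h0
    have hone : ∀ i ∉ Finset.range (N + 1), Eterm c a i = 1 := by
      intro i hi
      have hiN : N ≤ i := by
        simp only [Finset.mem_range, not_lt] at hi; omega
      have : a i = 0 := le_antisymm (hN ▸ hmono hiN) (ha0 i)
      exact Eterm_of_zero this
    exact (hasProd_prod_of_ne_finset_one hone).multipliable
  · push_neg at h0
    by_cases hz : ∃ i, Eterm c a i = 0
    · exact (hasProd_zero_of_exists_zero hz).multipliable
    · push_neg at hz
      have hlog : Summable fun i => Complex.log (Eterm c a i) := by
        apply Summable.of_norm_bounded_eventually_nat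
          (g := fun i => (9 / 2) * (‖c‖ ^ 2 * a i ^ 2))
          (Summable.mul_left (9 / 2) (Summable.mul_left (‖c‖ ^ 2) hsq))
        have hsmall : ∀ᶠ i in atTop, ‖c * (a i : ℂ)‖ ≤ 1 / 3 := by
          have : Tendsto (fun i => ‖c‖ * a i) atTop (𝓝 0) := by
            simpa using (tendsto_a a ha0 hsq).const_mul ‖c‖
          filter_upwards [this.eventually (eventually_le_nhds (by norm_num : (0:ℝ) < 1/3))]
            with i hi
          simpa [norm_mul, Complex.norm_real, abs_of_nonneg (ha0 i)] using hi
        filter_upwards [hsmall] with i hi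
        have hb : ‖Eterm c a i - 1‖ ≤ 3 * ‖c * (a i : ℂ)‖ ^ 2 :=
          key_bound_s17 (le_trans hi (by norm_num))
        have hhalf : ‖Eterm c a i - 1‖ ≤ 1 / 2 := by
          have : 3 * ‖c * (a i : ℂ)‖ ^ 2 ≤ 3 * ((1/3) * (1/3)) := by
            rw [sq]
            exact mul_le_mul_of_nonneg_left
              (mul_le_mul hi hi (norm_nonneg _) (by norm_num)) (by norm_num)
          linarith
        have hlg : ‖Complex.log (Eterm c a i)‖ ≤ 3 / 2 * ‖Eterm c a i - 1‖ := by
          have := Complex.norm_log_one_add_half_le_self (z := Eterm c a i - 1) hhalf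
          simpa using this
        have hnorm : ‖c * (a i : ℂ)‖ ^ 2 = ‖c‖ ^ 2 * a i ^ 2 := by
          rw [norm_mul, mul_pow, Complex.norm_real, Real.norm_eq_abs, sq_abs]
        calc ‖Complex.log (Eterm c a i)‖ ≤ 3 / 2 * ‖Eterm c a i - 1‖ := hlg
          _ ≤ 3 / 2 * (3 * ‖c * (a i : ℂ)‖ ^ 2) := by linarith
          _ = 9 / 2 * (‖c‖ ^ 2 * a i ^ 2) := by rw [hnorm]; ring
      exact Complex.multipliable_of_summable_log hlog

lemma trunc_eq (a : ℕ → ℝ) (ha0 : ∀ i, 0 ≤ a i) (hmono : Antitone a)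
    (hsq : Summable fun i => a i ^ 2) (c : ℂ) {R : ℝ} (hR : 1 ≤ R) :
    (∏' i, if R⁻¹ ^ 2 < a i then 1 - c * a i else 1)
      = Complex.exp (-(c * ((∑' i, if R⁻¹ ^ 2 < a i then a i else 0) : ℝ))) *
        (∏' i, if R⁻¹ ^ 2 < a i then Eterm c a i else 1) := by
  have hspec := ncut_spec a ha0 hmono hsq hR
  set n := ncut a R
  have hnotP : ∀ i ∉ Finset.range n, (if R⁻¹ ^ 2 < a i then 1 - c * (a i : ℂ) else 1) = 1 := by
    intro i hi
    rw [if_neg]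
    rw [hspec i]; simpa using hi
  have hnotS : ∀ i ∉ Finset.range n, (if R⁻¹ ^ 2 < a i then a i else 0) = 0 := by
    intro i hi
    rw [if_neg]
    rw [hspec i]; simpa using hi
  have hnotE : ∀ i ∉ Finset.range n, (if R⁻¹ ^ 2 < a i then Eterm c a i else 1) = 1 := by
    intro i hi
    rw [if_neg]
    rw [hspec i]; simpa using hi
  rw [tprod_eq_prod hnotP, tsum_eq_sum hnotS, tprod_eq_prod hnotE]
  have hmem : ∀ i ∈ Finset.range n, R⁻¹ ^ 2 < a i := by
    intro i hi
    rw [hspec i]; simpa using hi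
  rw [Finset.prod_congr rfl (fun i hi => if_pos (hmem i hi)),
    Finset.sum_congr rfl (fun i hi => if_pos (hmem i hi)),
    Finset.prod_congr rfl (fun i hi => if_pos (hmem i hi))]
  -- finite identity
  have hE : ∏ i ∈ Finset.range n, Eterm c a i
      = Complex.exp (c * ((∑ i ∈ Finset.range n, a i : ℝ) : ℂ)) *
        ∏ i ∈ Finset.range n, (1 - c * (a i : ℂ)) := by
    simp only [Eterm]
    rw [Finset.prod_mul_distrib, ← Complex.exp_sum]
    congr 2
    push_cast [Finset.mul_sum]
    rfl
  rw [hE, ← mul_assoc, ← Complex.exp_add]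
  rw [neg_add_cancel, Complex.exp_zero, one_mul]


lemma trunc_tendsto (a : ℕ → ℝ) (ha0 : ∀ i, 0 ≤ a i) (hmono : Antitone a)
    (hsq : Summable fun i => a i ^ 2) (c : ℂ) :
    Tendsto (fun R : ℝ => ∏' i, if R⁻¹ ^ 2 < a i then Eterm c a i else 1) atTop
      (𝓝 (∏' i, Eterm c a i)) := by
  have hmul := multipliable_Eterm a ha0 hmono hsq c
  have hinv : Tendsto (fun R : ℝ => R⁻¹ ^ 2) atTop (𝓝 0) := by
    simpa using (tendsto_inv_atTop_zero (𝕜 := ℝ)).pow 2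
  -- eventual equality with finite range products
  have heq : ∀ᶠ R : ℝ in atTop,
      (∏' i, if R⁻¹ ^ 2 < a i then Eterm c a i else 1)
        = ∏ i ∈ Finset.range (ncut a R), Eterm c a i := by
    filter_upwards [eventually_ge_atTop (1 : ℝ)] with R hR
    have hspec := ncut_spec a ha0 hmono hsq hR
    have hnot : ∀ i ∉ Finset.range (ncut a R),
        (if R⁻¹ ^ 2 < a i then Eterm c a i else 1) = 1 := by
      intro i hi
      rw [if_neg]
      rw [hspec i]; simpa using hi
    rw [tprod_eq_prod hnot]
    exact Finset.prod_congr rfl fun i hi => if_pos ((hspec i).2 (by simpa using hi))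
  refine Tendsto.congr' (by filter_upwards [heq] with R h; exact h.symm) ?_
  have hpp := hmul.hasProd.tendsto_prod_nat
  by_cases hz : ∃ N, a N = 0
  · -- eventually constant case
    set N := sInf {n | a n = 0} with hNdef
    have hN0 : a N = 0 := Nat.sInf_mem hz
    have hNlt : ∀ i < N, 0 < a i := by
      intro i hi
      have : i ∉ {n | a n = 0} := Nat.notMem_of_lt_sInf hi
      exact lt_of_le_of_ne (ha0 i) (Ne.symm this)
    have htp : (∏' i, Eterm c a i) = ∏ i ∈ Finset.range N, Eterm c a i := by
      apply tprod_eq_prod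
      intro i hi
      have hiN : N ≤ i := by simpa using hi
      exact Eterm_of_zero (le_antisymm (hN0 ▸ hmono hiN) (ha0 i))
    have hevN : ∀ᶠ R : ℝ in atTop, ncut a R = N := by
      have hcond : ∀ᶠ R : ℝ in atTop, (1 : ℝ) ≤ R ∧ ∀ i < N, R⁻¹ ^ 2 < a i := by
        rcases Nat.eq_zero_or_pos N with h0 | hpos
        · filter_upwards [eventually_ge_atTop (1 : ℝ)] with R hR
          exact ⟨hR, fun i hi => absurd hi (by omega)⟩
        · have hm : 0 < a (N - 1) := hNlt _ (by omega)
          filter_upwards [eventually_ge_atTop (1 : ℝ),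
            hinv.eventually (eventually_lt_nhds hm)] with R hR hRm
          refine ⟨hR, fun i hi => lt_of_lt_of_le hRm (hmono (by omega))⟩
      filter_upwards [hcond] with R hR
      obtain ⟨hR1, hRm⟩ := hR
      have hmem : N ∈ {n | a n ≤ R⁻¹ ^ 2} := by
        simp only [Set.mem_setOf_eq, hN0]; positivity
      refine le_antisymm (Nat.sInf_le hmem) ?_
      by_contra hc
      push_neg at hc
      have := Nat.sInf_mem (⟨N, hmem⟩ : {n | a n ≤ R⁻¹ ^ 2}.Nonempty)
      exact absurd (hRm _ hc) (not_lt.2 this)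
    rw [htp]
    refine Tendsto.congr' ?_ tendsto_const_nhds
    filter_upwards [hevN] with R hR
    rw [hR]
  · -- all positive: ncut → ∞
    push_neg at hz
    have hpos : ∀ i, 0 < a i := fun i => lt_of_le_of_ne (ha0 i) (Ne.symm (hz i))
    have hncut : Tendsto (fun R : ℝ => ncut a R) atTop atTop := by
      rw [tendsto_atTop]
      intro m
      filter_upwards [eventually_ge_atTop (1 : ℝ),
        hinv.eventually (eventually_lt_nhds (hpos m))] with R hR1 hRm
      exact le_of_lt ((ncut_spec a ha0 hmono hsq hR1 m).1 hRm)
    exact hpp.comp hncut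
/-- if γ₂ = 0 and γ₁ is the principal value sum
lim_{R→∞} (∑_{α_i⁺ > R⁻²} α_i⁺ − ∑_{α_i⁻ > R⁻²} α_i⁻), then for every z ∈ ℂ,
E_ω(z) = lim_{R→∞} ∏_{α_i⁺ > R⁻²} (1 − α_i⁺ z) ∏_{α_i⁻ > R⁻²} (1 + α_i⁻ z).
(Only finitely many indices satisfy α_i^± > R⁻², so the truncated sums and
products, written here as tsums/tprods of terms that are 0 resp. 1 off a finite
set, are really finite.) -/
theorem stmt17 (ω : OmegaHat) (hg2 : gamma2 ω = 0)
    (hg1 : Filter.Tendsto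
      (fun R : ℝ =>
        (∑' i, if R⁻¹ ^ 2 < ω.aP i then ω.aP i else 0) -
        (∑' i, if R⁻¹ ^ 2 < ω.aM i then ω.aM i else 0))
      Filter.atTop (nhds ω.g1)) :
    ∀ z : ℂ, Filter.Tendsto
      (fun R : ℝ =>
        (∏' i, if R⁻¹ ^ 2 < ω.aP i then 1 - (ω.aP i : ℂ) * z else 1) *
        (∏' i, if R⁻¹ ^ 2 < ω.aM i then 1 + (ω.aM i : ℂ) * z else 1))
      Filter.atTop (nhds (Eomega ω z)) := by
  intro z
  have hP := trunc_tendsto ω.aP ω.aP_nonneg ω.aP_antitone ω.summable_aP_sq z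
  have hM := trunc_tendsto ω.aM ω.aM_nonneg ω.aM_antitone ω.summable_aM_sq (-z)
  have h1 : Tendsto (fun R : ℝ =>
      ((((∑' i, if R⁻¹ ^ 2 < ω.aP i then ω.aP i else 0) -
        (∑' i, if R⁻¹ ^ 2 < ω.aM i then ω.aM i else 0)) : ℝ) : ℂ))
      atTop (𝓝 (ω.g1 : ℂ)) := (Complex.continuous_ofReal.tendsto _).comp hg1
  have hexp : Tendsto (fun R : ℝ => Complex.exp (-(z *
      ((((∑' i, if R⁻¹ ^ 2 < ω.aP i then ω.aP i else 0) -
        (∑' i, if R⁻¹ ^ 2 < ω.aM i then ω.aM i else 0)) : ℝ) : ℂ))))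
      atTop (𝓝 (Complex.exp (-(z * (ω.g1 : ℂ))))) :=
    (Complex.continuous_exp.tendsto _).comp ((h1.const_mul z).neg)
  have hlim := hexp.mul (hP.mul hM)
  have hEo : Eomega ω z = Complex.exp (-(z * (ω.g1 : ℂ))) *
      ((∏' i, Eterm z ω.aP i) * (∏' i, Eterm (-z) ω.aM i)) := by
    rw [Eomega, hg2]
    have h2nd : (fun i => Complex.exp (-(z * (ω.aM i : ℂ))) * (1 + z * (ω.aM i : ℂ)))
        = fun i => Eterm (-z) ω.aM i := by
      funext i
      simp [Eterm, neg_mul, sub_neg_eq_add]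
    rw [h2nd]
    have hfst : (fun i => Complex.exp (z * (ω.aP i : ℂ)) * (1 - z * (ω.aP i : ℂ)))
        = fun i => Eterm z ω.aP i := rfl
    rw [hfst]
    push_cast
    ring_nf
  rw [hEo]
  refine Tendsto.congr' ?_ hlim
  filter_upwards [eventually_ge_atTop (1 : ℝ)] with R hR
  have e1 : (∏' i, if R⁻¹ ^ 2 < ω.aP i then 1 - (ω.aP i : ℂ) * z else 1)
      = ∏' i, if R⁻¹ ^ 2 < ω.aP i then 1 - z * (ω.aP i : ℂ) else 1 :=
    tprod_congr fun i => by rw [mul_comm (ω.aP i : ℂ) z]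
  have e2 : (∏' i, if R⁻¹ ^ 2 < ω.aM i then 1 + (ω.aM i : ℂ) * z else 1)
      = ∏' i, if R⁻¹ ^ 2 < ω.aM i then 1 - (-z) * (ω.aM i : ℂ) else 1 :=
    tprod_congr fun i => by by_cases h : R⁻¹ ^ 2 < ω.aM i <;> simp [h] <;> ring_nf
  rw [e1, e2, trunc_eq ω.aP ω.aP_nonneg ω.aP_antitone ω.summable_aP_sq z hR,
    trunc_eq ω.aM ω.aM_nonneg ω.aM_antitone ω.summable_aM_sq (-z) hR]
  have hee : Complex.exp (-(z *
      ((((∑' i, if R⁻¹ ^ 2 < ω.aP i then ω.aP i else 0) -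
        (∑' i, if R⁻¹ ^ 2 < ω.aM i then ω.aM i else 0)) : ℝ) : ℂ)))
      = Complex.exp (-(z * ((∑' i, if R⁻¹ ^ 2 < ω.aP i then ω.aP i else 0 : ℝ) : ℂ))) *
        Complex.exp (-((-z) * ((∑' i, if R⁻¹ ^ 2 < ω.aM i then ω.aM i else 0 : ℝ) : ℂ))) := by
    rw [← Complex.exp_add]
    congr 1
    push_cast
    ring
  rw [hee]
  ring
end

section
/- Let ω = (α⁺, α⁻, γ₁, δ) ∈ Ω̂ and suppose that for every z ∈ ℂ, E_ω(z) = lim_{R→∞} ∏_{i : α_i⁺ > R^{−2}} (1 − α_i⁺ z) · ∏_{i : α_i⁻ > R^{−2}} (1 + α_i⁻ z). Then γ₂ = 0 and γ₁ = lim_{R→∞} (∑_{i : α_i⁺ > R^{−2}} α_i⁺ − ∑_{i : α_i⁻ > R^{−2}} α_i⁻). -/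
open Filter Topology Finset

/-! ### Auxiliary machinery -/

noncomputable def Ffac (z : ℂ) (x : ℝ) : ℂ := Complex.exp (z * (x : ℂ)) * (1 - z * (x : ℂ))

lemma Ffac_bound {w : ℂ} (hw : ‖w‖ ≤ 1) :
    ‖Complex.exp w * (1 - w) - 1‖ ≤ 3 * ‖w‖ ^ 2 := by
  have h1 := Complex.norm_exp_sub_one_sub_id_le hw
  have h2 := Complex.norm_exp_sub_one_le hw
  have heq : Complex.exp w * (1 - w) - 1
      = (Complex.exp w - 1 - w) - w * (Complex.exp w - 1) := by ring
  rw [heq, sub_eq_add_neg]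
  have h3 := norm_add_le (Complex.exp w - 1 - w) (-(w * (Complex.exp w - 1)))
  rw [norm_neg, norm_mul] at h3
  nlinarith [norm_nonneg w, norm_nonneg (Complex.exp w - 1)]

section OneSided

variable {a : ℕ → ℝ} (ha : ∀ i, 0 ≤ a i) (hsq : Summable fun i => a i ^ 2)

include ha hsq in
lemma summable_log_Ffac (z : ℂ) : Summable fun i => Complex.log (Ffac z (a i)) := by
  set C : ℝ := 9 / 2 * ‖z‖ ^ 2 with hC
  apply Summable.of_norm_bounded_eventually (hsq.mul_left C)
  have hz1 : (0:ℝ) < 3 * (‖z‖ + 1) := by positivity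
  have h0 : ∀ᶠ i in cofinite, a i ^ 2 < ((3 * (‖z‖ + 1))⁻¹) ^ 2 :=
    hsq.tendsto_cofinite_zero.eventually (eventually_lt_nhds (by positivity))
  filter_upwards [h0] with i hi
  have hinv : (0:ℝ) < (3 * (‖z‖ + 1))⁻¹ := by positivity
  have hai : a i < (3 * (‖z‖ + 1))⁻¹ := by nlinarith [ha i]
  have habs : ‖z * (a i : ℂ)‖ = ‖z‖ * a i := by
    rw [norm_mul, Complex.norm_real, Real.norm_of_nonneg (ha i)]
  have hw : ‖z * (a i : ℂ)‖ ≤ 1 / 3 := by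
    rw [habs]
    have step1 : ‖z‖ * a i ≤ ‖z‖ * (3 * (‖z‖ + 1))⁻¹ := by
      gcongr
    have step2 : ‖z‖ * (3 * (‖z‖ + 1))⁻¹ ≤ 1 / 3 := by
      rw [inv_eq_one_div, mul_one_div, div_le_div_iff₀ hz1 (by norm_num)]
      nlinarith [norm_nonneg z]
    linarith
  have hF : ‖Ffac z (a i) - 1‖ ≤ 3 * ‖z * (a i : ℂ)‖ ^ 2 :=
    Ffac_bound (le_trans hw (by norm_num))
  have hF2 : ‖Ffac z (a i) - 1‖ ≤ 1 / 2 := by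
    nlinarith [norm_nonneg (z * (a i : ℂ))]
  have hlog := Complex.norm_log_one_add_half_le_self (z := Ffac z (a i) - 1)
    (by assumption)
  rw [add_sub_cancel] at hlog
  calc ‖Complex.log (Ffac z (a i))‖ ≤ 3 / 2 * ‖Ffac z (a i) - 1‖ := hlog
    _ ≤ 3 / 2 * (3 * ‖z * (a i : ℂ)‖ ^ 2) := by
        nlinarith [norm_nonneg (Ffac z (a i) - 1)]
    _ = C * a i ^ 2 := by rw [habs, hC]; ring

lemma Ffac_ne_zero {z : ℂ} (hz : z.re = 0) (x : ℝ) : Ffac z x ≠ 0 := by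
  unfold Ffac
  refine mul_ne_zero (Complex.exp_ne_zero _) ?_
  intro hcon
  have h1 : (1 - z * (x:ℂ)).re = 0 := by rw [hcon]; simp
  simp [Complex.sub_re, Complex.mul_re, hz, Complex.ofReal_re, Complex.ofReal_im] at h1

include ha hsq in
lemma hasProd_Ffac {z : ℂ} (hz : z.re = 0) :
    HasProd (fun i => Ffac z (a i)) (∏' i, Ffac z (a i)) :=
  (Complex.hasProd_of_hasSum_log (f := fun i => Ffac z (a i))
    (fun i => Ffac_ne_zero hz _)
    (summable_log_Ffac ha hsq z).hasSum).multipliable.hasProd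

include ha hsq in
lemma tprod_Ffac_ne_zero {z : ℂ} (hz : z.re = 0) : (∏' i, Ffac z (a i)) ≠ 0 := by
  have h := Complex.cexp_tsum_eq_tprod (f := fun i => Ffac z (a i))
    (fun i => Ffac_ne_zero hz _) (summable_log_Ffac ha hsq z)
  rw [← h]
  exact Complex.exp_ne_zero _

end OneSided

open Classical in
noncomputable def trunc (a : ℕ → ℝ) (R : ℝ) : Finset ℕ :=
  if h : {i | R⁻¹ ^ 2 < a i}.Finite then h.toFinset else ∅

noncomputable def truncPad (a : ℕ → ℝ) (R : ℝ) : Finset ℕ :=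
  trunc a R ∪ (Finset.range ⌈R⌉₊).filter (fun i => a i = 0)

section Trunc

variable {a : ℕ → ℝ} (ha : ∀ i, 0 ≤ a i) (hsq : Summable fun i => a i ^ 2)

include ha hsq in
lemma finite_trunc_set {R : ℝ} (hR : 1 ≤ R) : {i | R⁻¹ ^ 2 < a i}.Finite := by
  have hR0 : (0:ℝ) < R := lt_of_lt_of_le one_pos hR
  have hc : (0:ℝ) < R⁻¹ ^ 2 := by positivity
  have hev : ∀ᶠ i in cofinite, a i ^ 2 < (R⁻¹ ^ 2) ^ 2 :=
    hsq.tendsto_cofinite_zero.eventually (eventually_lt_nhds (by positivity))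
  refine Set.Finite.subset (Filter.eventually_cofinite.mp hev) ?_
  intro i hi
  simp only [Set.mem_setOf_eq] at hi ⊢
  intro hcon
  nlinarith [ha i]

include ha hsq in
lemma mem_trunc {R : ℝ} (hR : 1 ≤ R) {i : ℕ} : i ∈ trunc a R ↔ R⁻¹ ^ 2 < a i := by
  unfold trunc
  rw [dif_pos (finite_trunc_set ha hsq hR)]
  simp

include ha hsq in
lemma tendsto_truncPad : Tendsto (truncPad a) atTop (atTop : Filter (Finset ℕ)) := by
  rw [atTop_finset_eq_iInf, tendsto_iInf]
  intro i
  rw [tendsto_principal]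
  have : ∀ᶠ R in atTop, i ∈ truncPad a R := by
    rcases eq_or_lt_of_le (ha i) with h0 | hpos
    · filter_upwards [eventually_ge_atTop ((i : ℝ) + 1)] with R hR
      unfold truncPad
      refine Finset.mem_union_right _ ?_
      rw [Finset.mem_filter, Finset.mem_range, Nat.lt_ceil]
      exact ⟨by linarith, h0.symm⟩
    · filter_upwards [eventually_ge_atTop (max 1 (2 / a i))] with R hR
      have hR1 : (1:ℝ) ≤ R := le_trans (le_max_left _ _) hR
      have hR2 : 2 / a i ≤ R := le_trans (le_max_right _ _) hR
      have hR0 : (0:ℝ) < R := lt_of_lt_of_le one_pos hR1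
      refine Finset.mem_union_left _ ((mem_trunc ha hsq hR1).mpr ?_)
      have hinv : R⁻¹ ≤ a i / 2 := by
        rw [inv_le_comm₀ hR0 (by positivity), inv_div]
        exact hR2
      have hinv1 : R⁻¹ ≤ 1 := by
        rw [inv_le_one_iff₀]; right; exact hR1
      have h0R : (0:ℝ) < R⁻¹ := by positivity
      calc R⁻¹ ^ 2 ≤ R⁻¹ := by nlinarith
        _ ≤ a i / 2 := hinv
        _ < a i := by linarith
  filter_upwards [this] with R hR
  simpa [Set.mem_Ici, Finset.le_iff_subset, Finset.singleton_subset_iff] using hR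

lemma prod_truncPad_eq (z : ℂ) (R : ℝ) :
    ∏ i ∈ truncPad a R, Ffac z (a i) = ∏ i ∈ trunc a R, Ffac z (a i) := by
  refine (Finset.prod_subset Finset.subset_union_left ?_).symm
  intro i hi hni
  have : a i = 0 := by
    rcases Finset.mem_union.mp hi with h | h
    · exact absurd h hni
    · exact (Finset.mem_filter.mp h).2
  simp [Ffac, this]

lemma prod_trunc_Ffac (z : ℂ) (s : Finset ℕ) :
    ∏ i ∈ s, Ffac z (a i)
      = Complex.exp (z * ((∑ i ∈ s, a i : ℝ) : ℂ)) * ∏ i ∈ s, (1 - z * (a i : ℂ)) := by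
  unfold Ffac
  rw [Finset.prod_mul_distrib, ← Complex.exp_sum]
  congr 2
  rw [← Finset.mul_sum]
  congr 1
  push_cast
  rfl

end Trunc

lemma tendsto_zero_of_cos (T : ℝ → ℝ)
    (hcos : ∀ t : ℝ, Tendsto (fun R => Real.cos (t * T R)) atTop (nhds 1)) :
    Tendsto T atTop (nhds 0) := by
  have hbdd : ∀ᶠ R in (atTop : Filter ℝ), |T R| ≤ 2 := by
    have hint : Tendsto (fun R => ∫ t in (0:ℝ)..1, Real.cos (t * T R)) atTop
        (nhds (∫ _t in (0:ℝ)..1, (1:ℝ))) := by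
      apply intervalIntegral.tendsto_integral_filter_of_dominated_convergence (bound := fun _ => 1)
      · exact Filter.Eventually.of_forall fun R =>
          (Continuous.aestronglyMeasurable (by continuity))
      · exact Filter.Eventually.of_forall fun R =>
          MeasureTheory.ae_of_all _ fun t _ => by
            rw [Real.norm_eq_abs]; exact Real.abs_cos_le_one _
      · exact intervalIntegrable_const
      · exact MeasureTheory.ae_of_all _ fun t _ => hcos t
    have h1 : (∫ _t in (0:ℝ)..1, (1:ℝ)) = 1 := by simp
    rw [h1] at hint
    have hev : ∀ᶠ R in (atTop : Filter ℝ),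
        (1:ℝ)/2 < ∫ t in (0:ℝ)..1, Real.cos (t * T R) :=
      hint.eventually (eventually_gt_nhds (by norm_num))
    filter_upwards [hev] with R hR
    by_contra hcon
    push_neg at hcon
    have hTne : T R ≠ 0 := by
      intro h0; rw [h0] at hcon; simp at hcon; linarith
    have hval : (∫ t in (0:ℝ)..1, Real.cos (t * T R)) = Real.sin (T R) / T R := by
      rw [intervalIntegral.integral_comp_mul_right Real.cos hTne, zero_mul, one_mul,
        integral_cos, Real.sin_zero, sub_zero, smul_eq_mul]
      ring
    rw [hval] at hR
    have hsin : |Real.sin (T R)| ≤ 1 := Real.abs_sin_le_one _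
    have hTpos : (0:ℝ) < |T R| := by positivity
    have habs : |Real.sin (T R) / T R| ≤ 1 / |T R| := by
      rw [abs_div]; gcongr
    have h2 : 1 / |T R| < 1 / 2 := by
      apply one_div_lt_one_div_of_lt (by norm_num) hcon
    have h3 : Real.sin (T R) / T R ≤ |Real.sin (T R) / T R| := le_abs_self _
    linarith
  by_contra hT
  have hfreq : ∃ ε > (0:ℝ), ∃ᶠ R in (atTop : Filter ℝ), ε ≤ |T R| := by
    by_contra hcon
    push_neg at hcon
    apply hT
    rw [Metric.tendsto_nhds]
    intro ε hε
    have := hcon ε hε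
    filter_upwards [this] with R hR
    rw [Real.dist_eq, sub_zero]
    exact hR
  obtain ⟨ε, hε, hfr⟩ := hfreq
  set K : Set ℝ := Set.Icc (-2:ℝ) 2 ∩ {x | ε ≤ |x|} with hK
  have hfr2 : ∃ᶠ R in (atTop : Filter ℝ), T R ∈ K := by
    apply (hfr.and_eventually hbdd).mono
    rintro R ⟨h1, h2⟩
    exact ⟨abs_le.mp h2, h1⟩
  have hseq : ∀ n : ℕ, ∃ R, (n:ℝ) ≤ R ∧ T R ∈ K := by
    intro n
    obtain ⟨R, hR1, hR2⟩ := Filter.frequently_atTop.mp hfr2 (n:ℝ)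
    exact ⟨R, hR1, hR2⟩
  choose u hu hKmem using hseq
  have hKcompact : IsCompact K :=
    (isCompact_Icc).inter_right (isClosed_le continuous_const continuous_abs)
  obtain ⟨c, hcK, φ, hφ, hconv⟩ := hKcompact.tendsto_subseq hKmem
  have hc0 : c ≠ 0 := by
    intro h0
    rw [hK] at hcK
    have := hcK.2
    rw [h0] at this
    simp at this
    linarith
  have hu_top : Tendsto (fun n => u (φ n)) atTop atTop := by
    apply tendsto_atTop_mono (fun n => le_trans (Nat.cast_le.mpr (hφ.le_apply)) (hu (φ n)))
    exact tendsto_natCast_atTop_atTop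
  set t : ℝ := Real.pi / (2 * c) with ht
  have h1 : Tendsto (fun n => Real.cos (t * T (u (φ n)))) atTop (nhds 1) :=
    (hcos t).comp hu_top
  have h0 : Tendsto (fun n => Real.cos (t * T (u (φ n)))) atTop (nhds (Real.cos (t * c))) :=
    ((Real.continuous_cos.comp (continuous_const.mul continuous_id)).continuousAt.tendsto).comp
      hconv
  have heq := tendsto_nhds_unique h1 h0
  have htc : t * c = Real.pi / 2 := by
    rw [ht]; field_simp
  rw [htc, Real.cos_pi_div_two] at heq
  norm_num at heq

/-! ### The main theorem -/

/-- conversely, if for every z ∈ ℂ,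
E_ω(z) = lim_{R→∞} ∏_{α_i⁺ > R⁻²} (1 − α_i⁺ z) ∏_{α_i⁻ > R⁻²} (1 + α_i⁻ z),
then γ₂ = 0 and γ₁ = lim_{R→∞} (∑_{α_i⁺ > R⁻²} α_i⁺ − ∑_{α_i⁻ > R⁻²} α_i⁻).
(Only finitely many indices satisfy α_i^± > R⁻², so the truncated sums and
products, written here as tsums/tprods of terms that are 0 resp. 1 off a finite
set, are really finite.) -/
theorem stmt18 (ω : OmegaHat)
    (h : ∀ z : ℂ, Filter.Tendsto
      (fun R : ℝ =>
        (∏' i, if R⁻¹ ^ 2 < ω.aP i then 1 - (ω.aP i : ℂ) * z else 1) *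
        (∏' i, if R⁻¹ ^ 2 < ω.aM i then 1 + (ω.aM i : ℂ) * z else 1))
      Filter.atTop (nhds (Eomega ω z))) :
    gamma2 ω = 0 ∧
    Filter.Tendsto
      (fun R : ℝ =>
        (∑' i, if R⁻¹ ^ 2 < ω.aP i then ω.aP i else 0) -
        (∑' i, if R⁻¹ ^ 2 < ω.aM i then ω.aM i else 0))
      Filter.atTop (nhds ω.g1) := by
  set SP : ℝ → ℝ := fun R => ∑' i, if R⁻¹ ^ 2 < ω.aP i then ω.aP i else 0 with hSP
  set SM : ℝ → ℝ := fun R => ∑' i, if R⁻¹ ^ 2 < ω.aM i then ω.aM i else 0 with hSM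
  -- the key limit statement
  have key : ∀ t : ℝ, Tendsto
      (fun R => Complex.exp (-(((t:ℂ) * Complex.I) * ((SP R - SM R : ℝ) : ℂ))))
      atTop (nhds (Complex.exp (-(ω.g1 : ℂ) * ((t:ℂ) * Complex.I)
        - (gamma2 ω : ℂ) / 2 * ((t:ℂ) * Complex.I) ^ 2))) := by
    intro t
    set z : ℂ := (t:ℂ) * Complex.I with hzdef
    have hz : z.re = 0 := by simp [hzdef]
    have hz' : (-z).re = 0 := by simp [hz]
    have hQP := tprod_Ffac_ne_zero ω.aP_nonneg ω.summable_aP_sq hz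
    have hQM := tprod_Ffac_ne_zero ω.aM_nonneg ω.summable_aM_sq hz'
    set A : ℝ → ℂ := fun R =>
      (∏ i ∈ truncPad ω.aP R, Ffac z (ω.aP i)) *
      (∏ i ∈ truncPad ω.aM R, Ffac (-z) (ω.aM i)) with hAdef
    have hAP : Tendsto (fun R => ∏ i ∈ truncPad ω.aP R, Ffac z (ω.aP i)) atTop
        (nhds (∏' i, Ffac z (ω.aP i))) :=
      (hasProd_Ffac ω.aP_nonneg ω.summable_aP_sq hz).comp
        (tendsto_truncPad ω.aP_nonneg ω.summable_aP_sq)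
    have hAM : Tendsto (fun R => ∏ i ∈ truncPad ω.aM R, Ffac (-z) (ω.aM i)) atTop
        (nhds (∏' i, Ffac (-z) (ω.aM i))) :=
      (hasProd_Ffac ω.aM_nonneg ω.summable_aM_sq hz').comp
        (tendsto_truncPad ω.aM_nonneg ω.summable_aM_sq)
    have hA : Tendsto A atTop (nhds ((∏' i, Ffac z (ω.aP i)) * (∏' i, Ffac (-z) (ω.aM i)))) :=
      hAP.mul hAM
    have hGA := (h z).mul (hA.inv₀ (mul_ne_zero hQP hQM))
    -- identify the limit
    have hlim : Eomega ω z * ((∏' i, Ffac z (ω.aP i)) * (∏' i, Ffac (-z) (ω.aM i)))⁻¹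
        = Complex.exp (-(ω.g1 : ℂ) * z - (gamma2 ω : ℂ) / 2 * z ^ 2) := by
      rw [Eomega]
      have e2 : (∏' i, (Complex.exp (-(z * (ω.aM i : ℂ))) * (1 + z * (ω.aM i : ℂ))))
          = ∏' i, Ffac (-z) (ω.aM i) := by
        congr 1
        funext i
        simp [Ffac, neg_mul, sub_neg_eq_add]
      rw [e2]
      have e1 : (∏' i, (Complex.exp (z * (ω.aP i : ℂ)) * (1 - z * (ω.aP i : ℂ))))
          = ∏' i, Ffac z (ω.aP i) := rfl
      rw [e1]
      field_simp
    -- eventual equality of the two functions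
    have hev : (fun R => Complex.exp (-(z * ((SP R - SM R : ℝ) : ℂ)))) =ᶠ[(atTop : Filter ℝ)]
        (fun R => ((∏' i, if R⁻¹ ^ 2 < ω.aP i then 1 - (ω.aP i : ℂ) * z else 1) *
          (∏' i, if R⁻¹ ^ 2 < ω.aM i then 1 + (ω.aM i : ℂ) * z else 1)) * (A R)⁻¹) := by
      filter_upwards [eventually_ge_atTop (1:ℝ)] with R hR
      have hmemP := fun {i} => mem_trunc ω.aP_nonneg ω.summable_aP_sq (a := ω.aP) hR (i := i)
      have hmemM := fun {i} => mem_trunc ω.aM_nonneg ω.summable_aM_sq (a := ω.aM) hR (i := i)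
      have hGP : (∏' i, if R⁻¹ ^ 2 < ω.aP i then 1 - (ω.aP i : ℂ) * z else 1)
          = ∏ i ∈ trunc ω.aP R, (1 - z * (ω.aP i : ℂ)) := by
        rw [tprod_eq_prod (s := trunc ω.aP R)
          (fun b hb => if_neg (fun hlt => hb (hmemP.mpr hlt)))]
        exact Finset.prod_congr rfl fun i hi => by rw [if_pos (hmemP.mp hi)]; ring
      have hGM : (∏' i, if R⁻¹ ^ 2 < ω.aM i then 1 + (ω.aM i : ℂ) * z else 1)
          = ∏ i ∈ trunc ω.aM R, (1 - (-z) * (ω.aM i : ℂ)) := by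
        rw [tprod_eq_prod (s := trunc ω.aM R)
          (fun b hb => if_neg (fun hlt => hb (hmemM.mpr hlt)))]
        exact Finset.prod_congr rfl fun i hi => by rw [if_pos (hmemM.mp hi)]; ring
      have hSPR : SP R = ∑ i ∈ trunc ω.aP R, ω.aP i := by
        rw [hSP]
        exact (tsum_eq_sum (fun b hb => if_neg (fun hlt => hb (hmemP.mpr hlt)))).trans
          (Finset.sum_congr rfl fun i hi => if_pos (hmemP.mp hi))
      have hSMR : SM R = ∑ i ∈ trunc ω.aM R, ω.aM i := by
        rw [hSM]
        exact (tsum_eq_sum (fun b hb => if_neg (fun hlt => hb (hmemM.mpr hlt)))).trans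
          (Finset.sum_congr rfl fun i hi => if_pos (hmemM.mp hi))
      have hP1 : (∏ i ∈ trunc ω.aP R, (1 - z * (ω.aP i : ℂ))) ≠ 0 := by
        refine Finset.prod_ne_zero_iff.mpr fun i _ => fun hc => Ffac_ne_zero hz (ω.aP i) ?_
        unfold Ffac; rw [hc, mul_zero]
      have hP2 : (∏ i ∈ trunc ω.aM R, (1 - (-z) * (ω.aM i : ℂ))) ≠ 0 := by
        refine Finset.prod_ne_zero_iff.mpr fun i _ => fun hc => Ffac_ne_zero hz' (ω.aM i) ?_
        unfold Ffac; rw [hc, mul_zero]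
      have hAR : A R = Complex.exp (z * ((SP R - SM R : ℝ) : ℂ)) *
          ((∏ i ∈ trunc ω.aP R, (1 - z * (ω.aP i : ℂ))) *
           (∏ i ∈ trunc ω.aM R, (1 - (-z) * (ω.aM i : ℂ)))) := by
        rw [hAdef]
        simp only
        rw [prod_truncPad_eq, prod_truncPad_eq, prod_trunc_Ffac z, prod_trunc_Ffac (-z),
          ← hSPR, ← hSMR]
        have hexp : Complex.exp (z * ((SP R : ℝ) : ℂ)) *
            Complex.exp ((-z) * ((SM R : ℝ) : ℂ))
            = Complex.exp (z * ((SP R - SM R : ℝ) : ℂ)) := by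
          rw [← Complex.exp_add]; congr 1; push_cast; ring
        rw [← hexp]; ring
      have hP2' : (∏ i ∈ trunc ω.aM R, ((1:ℂ) + z * (ω.aM i : ℂ))) ≠ 0 := by
        simpa [neg_mul, sub_neg_eq_add] using hP2
      rw [hGP, hGM, hAR, mul_inv, ← Complex.exp_neg]
      field_simp [hP1, hP2]
      rw [div_self]; simpa only [neg_mul] using hP2
    have hfinal := Filter.Tendsto.congr' hev.symm hGA
    rw [hlim] at hfinal
    exact hfinal
  -- Part 1: gamma2 = 0
  have hg2 : gamma2 ω = 0 := by
    have k1 := key 1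
    have habs := (continuous_norm.continuousAt.tendsto).comp k1
    have hconst : (fun R => ‖
        (Complex.exp (-((((1:ℝ):ℂ) * Complex.I) * ((SP R - SM R : ℝ) : ℂ))))‖)
        = fun _ => (1:ℝ) := by
      funext R
      rw [Complex.norm_exp]
      have : (-((((1:ℝ):ℂ) * Complex.I) * ((SP R - SM R : ℝ) : ℂ))).re = 0 := by
        simp [Complex.mul_re]
      rw [this, Real.exp_zero]
    have habs' : Tendsto (fun _ : ℝ => (1:ℝ)) atTop (nhds ‖
        (Complex.exp (-(ω.g1 : ℂ) * (((1:ℝ):ℂ) * Complex.I)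
          - (gamma2 ω : ℂ) / 2 * (((1:ℝ):ℂ) * Complex.I) ^ 2))‖) := by
      rw [← hconst]; exact habs
    have h1 := tendsto_nhds_unique habs' tendsto_const_nhds
    rw [Complex.norm_exp] at h1
    have hre : (-(ω.g1 : ℂ) * (((1:ℝ):ℂ) * Complex.I)
        - (gamma2 ω : ℂ) / 2 * (((1:ℝ):ℂ) * Complex.I) ^ 2).re = gamma2 ω / 2 := by
      have : (-(ω.g1 : ℂ) * (((1:ℝ):ℂ) * Complex.I)
          - (gamma2 ω : ℂ) / 2 * (((1:ℝ):ℂ) * Complex.I) ^ 2)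
          = ((gamma2 ω / 2 : ℝ) : ℂ) + ((-ω.g1 : ℝ) : ℂ) * Complex.I := by
        rw [mul_pow, Complex.I_sq]
        push_cast
        ring
      rw [this]
      simp [Complex.add_re, Complex.mul_re]
    rw [hre] at h1
    have hexp0 : Real.exp (gamma2 ω / 2) = Real.exp 0 := by
      rw [Real.exp_zero]; exact h1
    have := Real.exp_eq_exp.mp hexp0
    linarith
  refine ⟨hg2, ?_⟩
  -- Part 2: the sums converge to g1
  have key2 : ∀ t : ℝ, Tendsto
      (fun R => Complex.exp (-(((t:ℂ) * Complex.I) * ((SP R - SM R - ω.g1 : ℝ) : ℂ))))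
      atTop (nhds 1) := by
    intro t
    have k := key t
    rw [hg2] at k
    have k2 := k.mul_const (Complex.exp ((ω.g1 : ℂ) * ((t:ℂ) * Complex.I)))
    have hfun : ∀ R : ℝ,
        Complex.exp (-(((t:ℂ) * Complex.I) * ((SP R - SM R : ℝ) : ℂ))) *
          Complex.exp ((ω.g1 : ℂ) * ((t:ℂ) * Complex.I))
        = Complex.exp (-(((t:ℂ) * Complex.I) * ((SP R - SM R - ω.g1 : ℝ) : ℂ))) := by
      intro R
      rw [← Complex.exp_add]
      congr 1
      push_cast
      ring
    have hlim1 : Complex.exp (-(ω.g1 : ℂ) * ((t:ℂ) * Complex.I)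
          - ((0:ℝ) : ℂ) / 2 * ((t:ℂ) * Complex.I) ^ 2) *
        Complex.exp ((ω.g1 : ℂ) * ((t:ℂ) * Complex.I)) = 1 := by
      rw [← Complex.exp_add, ← Complex.exp_zero]
      congr 1
      push_cast
      ring
    rw [hlim1] at k2
    exact k2.congr hfun
  have hcos : ∀ t : ℝ, Tendsto (fun R => Real.cos (t * (SP R - SM R - ω.g1)))
      atTop (nhds 1) := by
    intro t
    have k := (Complex.continuous_re.continuousAt.tendsto).comp (key2 t)
    simp only [Function.comp_def] at k
    have hre : ∀ R : ℝ,
        (Complex.exp (-(((t:ℂ) * Complex.I) * ((SP R - SM R - ω.g1 : ℝ) : ℂ)))).re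
        = Real.cos (t * (SP R - SM R - ω.g1)) := by
      intro R
      have harg : -(((t:ℂ) * Complex.I) * ((SP R - SM R - ω.g1 : ℝ) : ℂ))
          = ((-(t * (SP R - SM R - ω.g1)) : ℝ) : ℂ) * Complex.I := by
        push_cast
        ring
      rw [harg, Complex.exp_ofReal_mul_I_re, Real.cos_neg]
    have : (fun R => (Complex.exp
        (-(((t:ℂ) * Complex.I) * ((SP R - SM R - ω.g1 : ℝ) : ℂ)))).re)
        = fun R => Real.cos (t * (SP R - SM R - ω.g1)) := funext hre
    rw [this] at k
    simpa using k
  have hT := tendsto_zero_of_cos (fun R => SP R - SM R - ω.g1) hcos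
  have := hT.add_const ω.g1
  simp only [zero_add] at this
  refine this.congr fun R => ?_
  ring
end
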